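/- arXiv:2212.05371 — 9 statements merged into one kernel-verified Lean document; each statement's English description precedes it below -/
import Mathlib

section
/- Let f : A → B be a contraction between Hilbert spaces, and set D_f = √(id − f† f) and D_{f†} = √(id − f f†) (positive square roots of the positive operators id − f†f and id − ff†). Then the block operator g : B ⊕ A → A ⊕ B given by g = [[−f†, D_f], [D_{f†}, f]] is an isometry, i.e. g†g = id. (Uses the intertwining identity f ∘ D_f = D_{f†} ∘ f.) -/
open StarAlgebra in
lemma commute_cfc_aux {E : Type*} [CStarAlgebra E] {a b : E} (ha : IsSelfAdjoint a)
    (h : Commute b a) (g : ℝ → ℝ) : Commute b (cfc g a) := by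
  have hmem : a ∈ StarSubalgebra.centralizer ℂ {b} := by
    rw [StarSubalgebra.mem_centralizer_iff]
    rintro c rfl
    refine ⟨h.eq, ?_⟩
    have := congrArg star h.eq
    simpa [ha.star_eq, mul_comm] using this.symm
  have hclosed : IsClosed (StarSubalgebra.centralizer ℂ {b} : Set E) := by
    rw [StarSubalgebra.coe_centralizer]
    have : (Set.centralizer (({b} : Set E) ∪ star ({b} : Set E)))
        = ⋂ m ∈ (({b} : Set E) ∪ star ({b} : Set E)), {x | m * x = x * m} := by
      ext x; simp [Set.mem_centralizer_iff]
    rw [this]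
    exact isClosed_biInter fun m _ => isClosed_eq (continuous_mul_left m)
      (continuous_mul_right m)
  have hle := elemental.le_of_mem (R := ℂ) hclosed hmem
  rw [cfc_real_eq_complex g ha]
  refine cfc_cases (fun x => Commute b x) a _ (Commute.zero_right b) fun hg hna => ?_
  rw [cfcHom_eq_of_isStarNormal]
  have hy : ((continuousFunctionalCalculus a)
      ⟨_, hg.restrict⟩ : E) ∈ elemental ℂ a := Subtype.coe_prop _
  have h2 := hle hy
  rw [StarSubalgebra.mem_centralizer_iff] at h2
  exact (h2 b rfl).1

set_option synthInstance.maxHeartbeats 1000000 in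
set_option maxHeartbeats 1000000 in
lemma commute_of_commute_sq {H : Type*} [NormedAddCommGroup H] [InnerProductSpace ℂ H]
    [CompleteSpace H] {D F : H →L[ℂ] H} (hD : D.IsPositive)
    (h : Commute F (D * D)) : Commute F D := by
  have hDnn : (0 : H →L[ℂ] H) ≤ D := (ContinuousLinearMap.nonneg_iff_isPositive D).2 hD
  have hXnn : (0 : H →L[ℂ] H) ≤ D * D := by
    simpa [hD.isSelfAdjoint.star_eq] using star_mul_self_nonneg D
  have hsq : CFC.sqrt (D * D) = D := CFC.sqrt_unique rfl hDnn
  rw [← hsq, CFC.sqrt_eq_cfc, cfc_nnreal_eq_real (ha := hXnn)]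
  exact commute_cfc_aux (IsSelfAdjoint.of_nonneg hXnn) h _

/-- Halmos dilation: for a contraction `f : A → B` between Hilbert spaces, with
`D_f = √(id − f†f)` and `D_{f†} = √(id − ff†)` (the positive square roots),
the block operator `g = [[−f†, D_f], [D_{f†}, f]] : B ⊕ A → A ⊕ B` is an isometry. -/
theorem stmt4 {A B : Type*}
    [NormedAddCommGroup A] [InnerProductSpace ℂ A] [CompleteSpace A]
    [NormedAddCommGroup B] [InnerProductSpace ℂ B] [CompleteSpace B]
    (f : A →L[ℂ] B) (hf : ‖f‖ ≤ 1)
    (Df : A →L[ℂ] A) (Dft : B →L[ℂ] B)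
    (hDf_pos : Df.IsPositive) (hDft_pos : Dft.IsPositive)
    (hDf_sq : Df ∘L Df = 1 - ContinuousLinearMap.adjoint f ∘L f)
    (hDft_sq : Dft ∘L Dft = 1 - f ∘L ContinuousLinearMap.adjoint f) :
    ∀ (b : B) (a : A),
      ‖(WithLp.equiv 2 (A × B)).symm (-(ContinuousLinearMap.adjoint f b) + Df a, Dft b + f a)‖
        = ‖(WithLp.equiv 2 (B × A)).symm (b, a)‖ := by
  set f' := ContinuousLinearMap.adjoint f with hf'
  have hsymDf : ∀ x y : A, (inner ℂ (Df x) y : ℂ) = inner ℂ x (Df y) := fun x y =>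
    (ContinuousLinearMap.isSelfAdjoint_iff_isSymmetric.mp hDf_pos.isSelfAdjoint) x y
  have hsymDft : ∀ x y : B, (inner ℂ (Dft x) y : ℂ) = inner ℂ x (Dft y) := fun x y =>
    (ContinuousLinearMap.isSelfAdjoint_iff_isSymmetric.mp hDft_pos.isSelfAdjoint) x y
  have hDf2 : ∀ a : A, Df (Df a) = a - f' (f a) := fun a =>
    congrFun (congrArg DFunLike.coe hDf_sq) a
  have hDft2 : ∀ b : B, Dft (Dft b) = b - f (f' b) := fun b =>
    congrFun (congrArg DFunLike.coe hDft_sq) b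
  -- the intertwining identity f ∘ Df = Dft ∘ f, via the block trick
  have hint : ∀ a : A, f (Df a) = Dft (f a) := by
    set H := WithLp 2 (A × B)
    set e := WithLp.prodContinuousLinearEquiv 2 ℂ A B
    set D : H →L[ℂ] H :=
      (e.symm : A × B →L[ℂ] H) ∘L (Df.prodMap Dft) ∘L (e : H →L[ℂ] A × B) with hD
    set F : H →L[ℂ] H :=
      (e.symm : A × B →L[ℂ] H) ∘L
        (ContinuousLinearMap.prod 0 (f ∘L ContinuousLinearMap.fst ℂ A B)) ∘L
        (e : H →L[ℂ] A × B) with hF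
    have hDapp : ∀ x : H, D x = (WithLp.equiv 2 _).symm (Df x.fst, Dft x.snd) := fun x => rfl
    have hFapp : ∀ x : H, F x = (WithLp.equiv 2 _).symm (0, f x.fst) := fun x => rfl
    have hDpos : D.IsPositive := by
      constructor
      · intro x y
        have l1 : (inner ℂ (D x) y : ℂ) = inner ℂ (Df x.fst) y.fst + inner ℂ (Dft x.snd) y.snd := rfl
        have l2 : (inner ℂ x (D y) : ℂ) = inner ℂ x.fst (Df y.fst) + inner ℂ x.snd (Dft y.snd) := rfl
        show (inner ℂ (D x) y : ℂ) = inner ℂ x (D y)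
        rw [l1, l2, hsymDf x.fst y.fst, hsymDft x.snd y.snd]
      · intro x
        have h1 := hDf_pos.2 x.fst
        have h2 := hDft_pos.2 x.snd
        have l1 : (inner ℂ (D x) x : ℂ) = inner ℂ (Df x.fst) x.fst + inner ℂ (Dft x.snd) x.snd := rfl
        have : D.reApplyInnerSelf x
            = Df.reApplyInnerSelf x.fst + Dft.reApplyInnerSelf x.snd := by
          simp only [ContinuousLinearMap.reApplyInnerSelf, l1, map_add]
        rw [this]; positivity
    have hcomm2 : Commute F (D * D) := by
      have key : ∀ a : A, f (Df (Df a)) = Dft (Dft (f a)) := by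
        intro a; rw [hDf2, hDft2, map_sub]
      ext x
      show F (D (D x)) = D (D (F x))
      simp only [hDapp, hFapp, WithLp.equiv_symm_apply, WithLp.toLp_fst, WithLp.toLp_snd, key, map_zero]
    have hcomm := commute_of_commute_sq hDpos hcomm2
    intro a
    have h0 := congrFun (congrArg DFunLike.coe hcomm.eq) ((WithLp.equiv 2 (A × B)).symm (a, 0))
    have h2 : ((WithLp.equiv 2 (A × B)).symm ((0 : A), f (Df a)) : WithLp 2 (A × B))
        = (WithLp.equiv 2 (A × B)).symm ((0 : A), Dft (f a)) := by
      simpa [ContinuousLinearMap.mul_apply, hDapp, hFapp, WithLp.equiv_symm_apply, WithLp.toLp_fst,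
        WithLp.toLp_snd, map_zero, (WithLp.toLp_injective (p := 2) (V := A × B)).eq_iff] using h0
    exact congrArg Prod.snd (congrArg (WithLp.equiv 2 (A × B)) h2)
  -- the norm computation
  intro b a
  rw [← Real.sqrt_sq (norm_nonneg ((WithLp.equiv 2 (A × B)).symm (-(f' b) + Df a, Dft b + f a))),
    ← Real.sqrt_sq (norm_nonneg ((WithLp.equiv 2 (B × A)).symm (b, a)))]
  congr 1
  rw [WithLp.prod_norm_sq_eq_of_L2, WithLp.prod_norm_sq_eq_of_L2]
  simp only [WithLp.equiv_symm_apply, WithLp.toLp_fst, WithLp.toLp_snd]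
  rw [neg_add_eq_sub, norm_sub_sq (𝕜 := ℂ), norm_add_sq (𝕜 := ℂ)]
  have e1 : ‖Df a‖ ^ 2 = ‖a‖ ^ 2 - ‖f a‖ ^ 2 := by
    have h1 : (inner ℂ (Df a) (Df a) : ℂ) = inner ℂ a a - inner ℂ (f a) (f a) := by
      rw [hsymDf a (Df a), hDf2, inner_sub_right, ContinuousLinearMap.adjoint_inner_right]
    have h2 := congrArg (fun z : ℂ => RCLike.re z) h1
    simpa [map_sub, inner_self_eq_norm_sq, ← Complex.ofReal_pow, Complex.ofReal_re] using h2
  have e2 : ‖Dft b‖ ^ 2 = ‖b‖ ^ 2 - ‖f' b‖ ^ 2 := by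
    have h1 : (inner ℂ (Dft b) (Dft b) : ℂ) = inner ℂ b b - inner ℂ (f' b) (f' b) := by
      rw [hsymDft b (Dft b), hDft2, inner_sub_right, hf',
        ContinuousLinearMap.adjoint_inner_left]
    have h2 := congrArg (fun z : ℂ => RCLike.re z) h1
    simpa [map_sub, inner_self_eq_norm_sq, ← Complex.ofReal_pow, Complex.ofReal_re] using h2
  have hc : RCLike.re (inner ℂ (Df a) (f' b) : ℂ) = RCLike.re (inner ℂ (Dft b) (f a) : ℂ) := by
    rw [hf', ContinuousLinearMap.adjoint_inner_right, hsymDft b (f a), ← hint a,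
      inner_re_symm]
  rw [e1, e2]
  linear_combination (-2 : ℝ) * hc
end

section
/- Let f : A ⊕ U → B ⊕ U be an isometry of Hilbert spaces with block decomposition f = [[a, b], [c, d]] where a = f_{BA}, b = f_{BU}, c = f_{UA}, d = f_{UU}. If id_U − d is invertible (with bounded inverse), then the map h = a + b ∘ (id − d)⁻¹ ∘ c : A → B is an isometry. -/
/-- If `f : A ⊕ U → B ⊕ U` is an isometry of Hilbert spaces with block decomposition
`[[a, b], [c, d]]` and `id − d` is invertible with bounded inverse `e`, then
`h = a + b ∘ (id − d)⁻¹ ∘ c` is an isometry. -/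
theorem stmt5 {A U B : Type*}
    [NormedAddCommGroup A] [InnerProductSpace ℂ A]
    [NormedAddCommGroup U] [InnerProductSpace ℂ U]
    [NormedAddCommGroup B] [InnerProductSpace ℂ B]
    (f : WithLp 2 (A × U) →L[ℂ] WithLp 2 (B × U))
    (a : A →L[ℂ] B) (b : U →L[ℂ] B) (c : A →L[ℂ] U) (d : U →L[ℂ] U)
    (hblock : ∀ (x : A) (u : U),
        f ((WithLp.equiv 2 (A × U)).symm (x, u))
          = (WithLp.equiv 2 (B × U)).symm (a x + b u, c x + d u))
    (hf : ∀ v, ‖f v‖ = ‖v‖)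
    (e : U →L[ℂ] U) (he₁ : (1 - d) ∘L e = 1) (he₂ : e ∘L (1 - d) = 1) :
    ∀ x : A, ‖(a + b ∘L e ∘L c) x‖ = ‖x‖ := by
  intro x
  set u : U := e (c x) with hu
  have hce : (1 - d) (e (c x)) = c x := by
    have := congrArg (fun g => g (c x)) he₁
    simpa using this
  have huc : c x + d u = u := by
    have : u - d u = c x := by simpa [ContinuousLinearMap.sub_apply] using hce
    rw [← this]; abel
  have hfx : f ((WithLp.equiv 2 (A × U)).symm (x, u))
      = (WithLp.equiv 2 (B × U)).symm ((a + b ∘L e ∘L c) x, u) := by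
    rw [hblock x u, huc]
    simp [ContinuousLinearMap.add_apply]; rfl
  have hn := hf ((WithLp.equiv 2 (A × U)).symm (x, u))
  rw [hfx] at hn
  have h1 : ‖(WithLp.equiv 2 (B × U)).symm ((a + b ∘L e ∘L c) x, u)‖ ^ 2
      = ‖(a + b ∘L e ∘L c) x‖ ^ 2 + ‖u‖ ^ 2 := by
    rw [WithLp.prod_norm_sq_eq_of_L2]; simp
  have h2 : ‖(WithLp.equiv 2 (A × U)).symm (x, u)‖ ^ 2 = ‖x‖ ^ 2 + ‖u‖ ^ 2 := by
    rw [WithLp.prod_norm_sq_eq_of_L2]; simp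
  have : ‖(a + b ∘L e ∘L c) x‖ ^ 2 = ‖x‖ ^ 2 := by
    have := congrArg (fun t => t ^ 2) hn
    rw [h1, h2] at this
    linarith
  have := congrArg Real.sqrt this
  simpa [Real.sqrt_sq, norm_nonneg] using this
end

section
/- Let f : A ⊕ U → B ⊕ U be a contraction of Hilbert spaces with block decomposition f_{BA}, f_{BU}, f_{UA}, f_{UU}. If id_U − f_{UU} is invertible, then h = f_{BA} + f_{BU} ∘ (id − f_{UU})⁻¹ ∘ f_{UA} is a contraction. -/
/-- If `f : A ⊕ U → B ⊕ U` is a contraction of Hilbert spaces with block decomposition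
`f_{BA}, f_{BU}, f_{UA}, f_{UU}` and `id − f_{UU}` is invertible with bounded inverse `e`,
then `h = f_{BA} + f_{BU} ∘ (id − f_{UU})⁻¹ ∘ f_{UA}` is a contraction. -/
theorem stmt6 {A U B : Type*}
    [NormedAddCommGroup A] [InnerProductSpace ℂ A]
    [NormedAddCommGroup U] [InnerProductSpace ℂ U]
    [NormedAddCommGroup B] [InnerProductSpace ℂ B]
    (f : WithLp 2 (A × U) →L[ℂ] WithLp 2 (B × U))
    (fBA : A →L[ℂ] B) (fBU : U →L[ℂ] B) (fUA : A →L[ℂ] U) (fUU : U →L[ℂ] U)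
    (hblock : ∀ (x : A) (u : U),
        f ((WithLp.equiv 2 (A × U)).symm (x, u))
          = (WithLp.equiv 2 (B × U)).symm (fBA x + fBU u, fUA x + fUU u))
    (hf : ∀ v, ‖f v‖ ≤ ‖v‖)
    (e : U →L[ℂ] U) (he₁ : (1 - fUU) ∘L e = 1) (he₂ : e ∘L (1 - fUU) = 1) :
    ∀ x : A, ‖(fBA + fBU ∘L e ∘L fUA) x‖ ≤ ‖x‖ := by
  intro x
  set u := e (fUA x) with hu
  have h1 : u - fUU u = fUA x := by
    have := congrArg (fun g : U →L[ℂ] U => g (fUA x)) he₁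
    simpa [ContinuousLinearMap.sub_apply] using this
  have huu : fUA x + fUU u = u := by
    rw [← h1]; abel
  have happ : (fBA + fBU ∘L e ∘L fUA) x = fBA x + fBU u := by
    simp [hu]
  have hfeq : f ((WithLp.equiv 2 (A × U)).symm (x, u))
      = (WithLp.equiv 2 (B × U)).symm ((fBA + fBU ∘L e ∘L fUA) x, u) := by
    rw [hblock, happ, huu]
  have key := hf ((WithLp.equiv 2 (A × U)).symm (x, u))
  rw [hfeq] at key
  have hsq : ‖(fBA + fBU ∘L e ∘L fUA) x‖ ^ 2 + ‖u‖ ^ 2 ≤ ‖x‖ ^ 2 + ‖u‖ ^ 2 := by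
    have h2 := WithLp.prod_norm_sq_eq_of_L2 ((WithLp.equiv 2 (B × U)).symm
      ((fBA + fBU ∘L e ∘L fUA) x, u))
    have h3 := WithLp.prod_norm_sq_eq_of_L2 ((WithLp.equiv 2 (A × U)).symm (x, u))
    simp only [WithLp.equiv_symm_apply, WithLp.toLp_fst, WithLp.toLp_snd] at h2 h3
    rw [← h2, ← h3]
    exact pow_le_pow_left₀ (norm_nonneg _) key 2
  exact (pow_le_pow_iff_left₀ (norm_nonneg _) (norm_nonneg _) two_ne_zero).mp (by linarith)
end

section
/- Let f : A ⊕ U → B ⊕ U be a contraction of Hilbert spaces with blocks f_{BU} : U → B and f_{UU} : U → U. Then for every u ∈ U, lim_{n→∞} ‖f_{BU} ∘ f_{UU}^n (u)‖ = 0, i.e. f_{BU} f_{UU}^n converges to 0 in the strong operator topology. -/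
/-- If `f : A ⊕ U → B ⊕ U` is a contraction of Hilbert spaces with blocks
`f_{BU} : U → B` and `f_{UU} : U → U`, then `f_{BU} ∘ f_{UU}ⁿ → 0` in the strong operator
topology, i.e. `‖f_{BU}(f_{UU}ⁿ(u))‖ → 0` for every `u ∈ U`. -/
theorem stmt8 {A U B : Type*}
    [NormedAddCommGroup A] [InnerProductSpace ℂ A]
    [NormedAddCommGroup U] [InnerProductSpace ℂ U]
    [NormedAddCommGroup B] [InnerProductSpace ℂ B]
    (f : WithLp 2 (A × U) →L[ℂ] WithLp 2 (B × U))
    (fBA : A →L[ℂ] B) (fBU : U →L[ℂ] B) (fUA : A →L[ℂ] U) (fUU : U →L[ℂ] U)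
    (hblock : ∀ (x : A) (u : U),
        f ((WithLp.equiv 2 (A × U)).symm (x, u))
          = (WithLp.equiv 2 (B × U)).symm (fBA x + fBU u, fUA x + fUU u))
    (hf : ∀ v, ‖f v‖ ≤ ‖v‖) :
    ∀ u : U, Filter.Tendsto (fun n : ℕ => ‖fBU ((fUU ^ n) u)‖) Filter.atTop (nhds 0) := by
  -- key inequality: ‖fBU u‖² + ‖fUU u‖² ≤ ‖u‖²
  have key : ∀ u : U, ‖fBU u‖ ^ 2 + ‖fUU u‖ ^ 2 ≤ ‖u‖ ^ 2 := by
    intro u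
    have h1 := hf ((WithLp.equiv 2 (A × U)).symm (0, u))
    rw [hblock 0 u] at h1
    have h2 : ‖(WithLp.equiv 2 (B × U)).symm (fBA 0 + fBU u, fUA 0 + fUU u)‖ ^ 2
        = ‖fBU u‖ ^ 2 + ‖fUU u‖ ^ 2 := by
      rw [WithLp.prod_norm_sq_eq_of_L2]
      simp
    have h3 : ‖(WithLp.equiv 2 (A × U)).symm ((0 : A), u)‖ ^ 2 = ‖u‖ ^ 2 := by
      rw [WithLp.prod_norm_sq_eq_of_L2]
      simp
    calc ‖fBU u‖ ^ 2 + ‖fUU u‖ ^ 2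
        = ‖(WithLp.equiv 2 (B × U)).symm (fBA 0 + fBU u, fUA 0 + fUU u)‖ ^ 2 := h2.symm
      _ ≤ ‖(WithLp.equiv 2 (A × U)).symm ((0 : A), u)‖ ^ 2 := by
          apply pow_le_pow_left₀ (norm_nonneg _) h1
      _ = ‖u‖ ^ 2 := h3
  intro u
  set a : ℕ → ℝ := fun n => ‖(fUU ^ n) u‖ ^ 2 with ha
  have hmono : Antitone a := by
    apply antitone_nat_of_succ_le
    intro n
    have := key ((fUU ^ n) u)
    have h2 : (fUU ^ (n + 1)) u = fUU ((fUU ^ n) u) := by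
      rw [pow_succ']; rfl
    simp only [ha, h2]
    nlinarith [sq_nonneg ‖fBU ((fUU ^ n) u)‖]
  have hbdd : BddBelow (Set.range a) :=
    ⟨0, by rintro x ⟨n, rfl⟩; positivity⟩
  have hconv : Filter.Tendsto a Filter.atTop (nhds (⨅ n, a n)) :=
    tendsto_atTop_ciInf hmono hbdd
  have hdiff : Filter.Tendsto (fun n => a n - a (n + 1)) Filter.atTop (nhds 0) := by
    have := hconv.sub (hconv.comp (Filter.tendsto_add_atTop_nat 1))
    simpa using this
  -- ‖fBU (fUU^n u)‖² ≤ a n - a (n+1)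
  have hsq : Filter.Tendsto (fun n => ‖fBU ((fUU ^ n) u)‖ ^ 2) Filter.atTop (nhds 0) := by
    refine squeeze_zero (fun n => by positivity) (fun n => ?_) hdiff
    have := key ((fUU ^ n) u)
    have h2 : (fUU ^ (n + 1)) u = fUU ((fUU ^ n) u) := by
      rw [pow_succ']; rfl
    simp only [ha, h2]
    linarith
  have := hsq.sqrt
  simp only [Real.sqrt_zero] at this
  convert this using 2 with n
  rw [Real.sqrt_sq (norm_nonneg _)]
end

section
/- Let H be a finite-dimensional complex Hilbert space and f : H → H a completely nonunitary contraction, i.e. a contraction such that there is no nonzero reducing subspace on which f restricts to a unitary. Then the operator norm of f^{dim H} is strictly less than 1. -/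
open ComplexInnerProductSpace ContinuousLinearMap in
lemma aux_pos9 {H : Type*} [NormedAddCommGroup H] [InnerProductSpace ℂ H]
    (T : H →L[ℂ] H) (hsym : ∀ x y : H, ⟪T x, y⟫ = ⟪x, T y⟫)
    (hpos : ∀ x : H, 0 ≤ (⟪T x, x⟫ : ℂ).re) {v : H} (h : (⟪T v, v⟫ : ℂ).re = 0) :
    T v = 0 := by
  by_contra hne
  set w := T v with hw
  have hq : ∀ t : ℝ, 0 ≤ 2 * t * ‖w‖ ^ 2 + t ^ 2 * (⟪T w, w⟫ : ℂ).re := by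
    intro t
    have h0 := hpos (v + (t : ℂ) • w)
    have hexp : (⟪T (v + (t:ℂ) • w), v + (t:ℂ) • w⟫ : ℂ)
        = ⟪T v, v⟫ + (t:ℂ) * ⟪T v, w⟫ + (t:ℂ) * ⟪T w, v⟫
          + ((t^2 : ℝ):ℂ) * ⟪T w, w⟫ := by
      rw [map_add, map_smul, inner_add_left, inner_add_right, inner_add_right,
        inner_smul_left, inner_smul_left, inner_smul_right, inner_smul_right,
        Complex.conj_ofReal]
      push_cast
      ring
    have hs : (⟪T w, v⟫ : ℂ).re = (⟪T v, w⟫ : ℂ).re := by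
      rw [hsym w v, ← inner_conj_symm, Complex.conj_re]
    have hww : (⟪T v, w⟫ : ℂ).re = ‖w‖ ^ 2 := by
      have := inner_self_eq_norm_sq (𝕜 := ℂ) (E := H) w
      rw [← hw]
      simpa using this
    rw [hexp] at h0
    simp only [Complex.add_re, Complex.re_ofReal_mul, h, hs, hww] at h0
    linarith
  have hC := hpos w
  have hwpos : (0:ℝ) < ‖w‖ ^ 2 := by
    have : 0 < ‖w‖ := norm_pos_iff.mpr hne
    positivity
  set C := (⟪T w, w⟫ : ℂ).re with hCdef
  have h1 : 0 < C + 1 := by linarith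
  have hc : 0 < ‖w‖ ^ 2 / (C + 1) := div_pos hwpos h1
  have h2 : (‖w‖ ^ 2 / (C + 1)) * C < 2 * ‖w‖ ^ 2 := by
    rw [div_mul_eq_mul_div, div_lt_iff₀ h1]
    nlinarith
  have h3 := hq (-(‖w‖ ^ 2 / (C + 1)))
  nlinarith [h3, h2, hc]

open ComplexInnerProductSpace ContinuousLinearMap in
lemma isom_iff9 {H : Type*} [NormedAddCommGroup H] [InnerProductSpace ℂ H] [CompleteSpace H]
    (g : H →L[ℂ] H) (hg : ∀ v, ‖g v‖ ≤ ‖v‖) (v : H) :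
    (ContinuousLinearMap.adjoint g * g) v = v ↔ ‖g v‖ = ‖v‖ := by
  have hinner : ∀ x y : H, (⟪((1 : H →L[ℂ] H) - adjoint g * g) x, y⟫ : ℂ)
      = ⟪x, y⟫ - ⟪g x, g y⟫ := by
    intro x y
    rw [ContinuousLinearMap.sub_apply, ContinuousLinearMap.one_apply, inner_sub_left, ContinuousLinearMap.mul_apply, adjoint_inner_left]
  constructor
  · intro h
    have h2 : (⟪g v, g v⟫ : ℂ) = ⟪v, v⟫ := by
      rw [← adjoint_inner_left, ← ContinuousLinearMap.mul_apply, h]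
    have h3 := congrArg Complex.re h2
    have h4 : ‖g v‖ ^ 2 = ‖v‖ ^ 2 := by
      have e1 := inner_self_eq_norm_sq (𝕜 := ℂ) (g v)
      have e2 := inner_self_eq_norm_sq (𝕜 := ℂ) v
      simp only [RCLike.re_to_complex] at e1 e2
      rw [← e1, ← e2, h3]
    exact le_antisymm (hg v) (by nlinarith [norm_nonneg (g v), norm_nonneg v])
  · intro h
    have hsym : ∀ x y : H, (⟪((1 : H →L[ℂ] H) - adjoint g * g) x, y⟫ : ℂ)
        = ⟪x, ((1 : H →L[ℂ] H) - adjoint g * g) y⟫ := by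
      intro x y
      rw [hinner, ContinuousLinearMap.sub_apply, ContinuousLinearMap.one_apply, inner_sub_right, ContinuousLinearMap.mul_apply, adjoint_inner_right]
    have hre : ∀ x : H, (⟪((1 : H →L[ℂ] H) - adjoint g * g) x, x⟫ : ℂ).re
        = ‖x‖ ^ 2 - ‖g x‖ ^ 2 := by
      intro x
      rw [hinner, Complex.sub_re]
      have e1 := inner_self_eq_norm_sq (𝕜 := ℂ) x
      have e2 := inner_self_eq_norm_sq (𝕜 := ℂ) (g x)
      simp only [RCLike.re_to_complex] at e1 e2
      rw [e1, e2]
    have hpos : ∀ x : H, 0 ≤ (⟪((1 : H →L[ℂ] H) - adjoint g * g) x, x⟫ : ℂ).re := by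
      intro x
      rw [hre]
      nlinarith [hg x, norm_nonneg (g x), norm_nonneg x]
    have h0 : (⟪((1 : H →L[ℂ] H) - adjoint g * g) v, v⟫ : ℂ).re = 0 := by
      rw [hre, h]; ring
    have := aux_pos9 _ hsym hpos h0
    rw [ContinuousLinearMap.sub_apply, ContinuousLinearMap.one_apply, sub_eq_zero] at this
    exact this.symm

open ContinuousLinearMap in
lemma pow_contraction9 {H : Type*} [NormedAddCommGroup H] [InnerProductSpace ℂ H]
    (f : H →L[ℂ] H) (hf : ∀ v, ‖f v‖ ≤ ‖v‖) (n : ℕ) : ∀ v : H, ‖(f ^ n) v‖ ≤ ‖v‖ := by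
  induction n with
  | zero => intro v; simp
  | succ n ih =>
    intro v
    calc ‖(f ^ (n + 1)) v‖ = ‖(f ^ n) (f v)‖ := by rw [pow_succ, ContinuousLinearMap.mul_apply]
    _ ≤ ‖f v‖ := ih (f v)
    _ ≤ ‖v‖ := hf v

open ContinuousLinearMap in
/-- `V k` : vectors on which the first `k` powers of `f` are isometric. -/
noncomputable def Vsub9 {H : Type*} [NormedAddCommGroup H] [InnerProductSpace ℂ H] [CompleteSpace H]
    (f : H →L[ℂ] H) (k : ℕ) : Submodule ℂ H :=
  ⨅ n ∈ Finset.Iic k,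
    LinearMap.ker (((1 - ContinuousLinearMap.adjoint (f ^ n) * f ^ n) : H →L[ℂ] H) : H →ₗ[ℂ] H)

open ContinuousLinearMap in
lemma mem_Vsub9 {H : Type*} [NormedAddCommGroup H] [InnerProductSpace ℂ H] [CompleteSpace H]
    (f : H →L[ℂ] H) (hf : ∀ v, ‖f v‖ ≤ ‖v‖) (k : ℕ) (v : H) :
    v ∈ Vsub9 f k ↔ ∀ n ≤ k, ‖(f ^ n) v‖ = ‖v‖ := by
  simp only [Vsub9, Submodule.mem_iInf, LinearMap.mem_ker, Finset.mem_Iic, ContinuousLinearMap.coe_coe]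
  constructor
  · intro hv n hn
    have := hv n hn
    rw [ContinuousLinearMap.sub_apply, ContinuousLinearMap.one_apply, sub_eq_zero] at this
    exact (isom_iff9 (f ^ n) (pow_contraction9 f hf n) v).mp this.symm
  · intro hv n hn
    have := (isom_iff9 (f ^ n) (pow_contraction9 f hf n) v).mpr (hv n hn)
    show ((1 - ContinuousLinearMap.adjoint (f ^ n) * f ^ n) : H →L[ℂ] H) v = 0
    rw [ContinuousLinearMap.sub_apply, ContinuousLinearMap.one_apply, sub_eq_zero, this]


open ContinuousLinearMap in
/-- A completely nonunitary contraction `f` on a finite-dimensional complex Hilbert space `H`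
(no nonzero reducing subspace on which `f` restricts to a unitary) satisfies
`‖f ^ (dim H)‖ < 1`. -/
theorem stmt9 {H : Type*} [NormedAddCommGroup H] [InnerProductSpace ℂ H]
    [FiniteDimensional ℂ H]
    (f : H →L[ℂ] H) (hf : ∀ v, ‖f v‖ ≤ ‖v‖)
    (hcnu : ∀ K : Submodule ℂ H,
        (∀ x ∈ K, f x ∈ K) → (∀ x ∈ K, ContinuousLinearMap.adjoint f x ∈ K) →
        (∀ x ∈ K, ‖f x‖ = ‖x‖) → (∀ y ∈ K, ∃ x ∈ K, f x = y) → K = ⊥) :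
    ‖f ^ Module.finrank ℂ H‖ < 1 := by
  rcases subsingleton_or_nontrivial H with hsub | hnt
  · have h0 : ‖f ^ Module.finrank ℂ H‖ = 0 :=
      ContinuousLinearMap.opNorm_subsingleton _
    rw [h0]; norm_num
  set N := Module.finrank ℂ H with hN
  have hNpos : 0 < N := Module.finrank_pos
  have hpow := pow_contraction9 f hf
  have hmem := mem_Vsub9 f hf
  set V := Vsub9 f with hV
  have hanti : ∀ {j k : ℕ}, j ≤ k → V k ≤ V j := by
    intro j k hjk v hv
    rw [hmem] at hv ⊢
    exact fun n hn => hv n (hn.trans hjk)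
  have hstep : ∀ m, V m = V (m + 1) → V (m + 1) = V (m + 2) := by
    intro m heq
    refine le_antisymm ?_ (hanti (by omega))
    intro v hv
    have hv' := (hmem (m + 1) v).mp hv
    have hfv1 : ‖f v‖ = ‖v‖ := by
      have := hv' 1 (by omega); rwa [pow_one] at this
    rw [hmem]
    intro n hn
    rcases Nat.lt_or_ge n (m + 2) with h | h
    · exact hv' n (by omega)
    · have hnn : n = m + 2 := by omega
      subst hnn
      have hfv : f v ∈ V m := by
        rw [hmem]
        intro j hj
        calc ‖(f ^ j) (f v)‖ = ‖(f ^ (j + 1)) v‖ := by rw [pow_succ, ContinuousLinearMap.mul_apply]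
        _ = ‖v‖ := hv' (j + 1) (by omega)
        _ = ‖f v‖ := hfv1.symm
      rw [heq] at hfv
      have hlast := (hmem (m + 1) (f v)).mp hfv (m + 1) le_rfl
      calc ‖(f ^ (m + 2)) v‖ = ‖(f ^ (m + 1)) (f v)‖ := by rw [pow_succ, ContinuousLinearMap.mul_apply]
      _ = ‖f v‖ := hlast
      _ = ‖v‖ := hfv1
  have hstep' : ∀ m, V m = V (m + 1) → ∀ j, V m = V (m + j) := by
    intro m heq
    have hall : ∀ j, V (m + j) = V (m + j + 1) := by
      intro j
      induction j with
      | zero => exact heq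
      | succ j ih => exact hstep (m + j) ih
    intro j
    induction j with
    | zero => rfl
    | succ j ih => exact ih.trans (hall j)
  have hfull : ∀ v ∈ V N, ∀ n, ‖(f ^ n) v‖ = ‖v‖ := by
    by_cases hex : ∃ k, k < N ∧ V k = V (k + 1)
    · obtain ⟨k, hkN, hkeq⟩ := hex
      have h1 := hstep' k hkeq
      have hNk : V N = V k := by
        have := h1 (N - k)
        rw [Nat.add_sub_cancel' hkN.le] at this
        exact this.symm
      intro v hv n
      rcases le_or_gt n N with h | h
      · exact (hmem N v).mp hv n h
      · have hkn : V k = V n := by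
          have := h1 (n - k)
          rwa [Nat.add_sub_cancel' (by omega : k ≤ n)] at this
        have hvn : v ∈ V n := by rw [← hkn, ← hNk]; exact hv
        exact (hmem n v).mp hvn n le_rfl
    · push_neg at hex
      have hstrict : ∀ k, k < N → V (k + 1) < V k := by
        intro k hk
        exact lt_of_le_of_ne (hanti (Nat.le_succ k)) fun h => hex k hk h.symm
      have hrank : ∀ k, k ≤ N → Module.finrank ℂ (V k) + k ≤ N := by
        intro k
        induction k with
        | zero =>
          intro _
          simpa using Submodule.finrank_le (V 0)
        | succ k ih =>
          intro hk
          have h2 := Submodule.finrank_lt_finrank_of_lt (hstrict k (by omega))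
          have h3 := ih (by omega)
          omega
      have hbot : V N = ⊥ := by
        have h4 := hrank N le_rfl
        have h5 : Module.finrank ℂ (V N) = 0 := by omega
        exact Submodule.finrank_eq_zero.mp h5
      intro v hv n
      rw [hbot, Submodule.mem_bot] at hv
      subst hv
      simp
  have hisoV : ∀ x ∈ V N, ‖f x‖ = ‖x‖ := by
    intro x hx
    have := hfull x hx 1
    rwa [pow_one] at this
  have hfW : ∀ x ∈ V N, f x ∈ V N := by
    intro x hx
    rw [hmem]
    intro n _
    calc ‖(f ^ n) (f x)‖ = ‖(f ^ (n + 1)) x‖ := by rw [pow_succ, ContinuousLinearMap.mul_apply]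
    _ = ‖x‖ := hfull x hx (n + 1)
    _ = ‖f x‖ := (hisoV x hx).symm
  have hsurjV : ∀ y ∈ V N, ∃ x ∈ V N, f x = y := by
    have hres : ∀ x ∈ V N, (f : H →ₗ[ℂ] H) x ∈ V N := hfW
    let g : V N →ₗ[ℂ] V N := LinearMap.restrict (f : H →ₗ[ℂ] H) hres
    have hinj : Function.Injective g := by
      apply LinearMap.ker_eq_bot.mp
      rw [Submodule.eq_bot_iff]
      intro x hx
      rw [LinearMap.mem_ker] at hx
      have hx1 : f (x : H) = 0 := congrArg Subtype.val hx
      have : ‖(x : H)‖ = 0 := by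
        rw [← hisoV (x : H) x.2, hx1, norm_zero]
      exact Subtype.ext (norm_eq_zero.mp this)
    have hsurj : Function.Surjective g := LinearMap.injective_iff_surjective.mp hinj
    intro y hy
    obtain ⟨x, hxy⟩ := hsurj ⟨y, hy⟩
    exact ⟨x.1, x.2, congrArg Subtype.val hxy⟩
  have hadjV : ∀ x ∈ V N, ContinuousLinearMap.adjoint f x ∈ V N := by
    intro x hx
    obtain ⟨z, hz, hzx⟩ := hsurjV x hx
    have hxz : ContinuousLinearMap.adjoint f x = z := by
      rw [← hzx, ← ContinuousLinearMap.mul_apply]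
      exact (isom_iff9 f hf z).mpr (hisoV z hz)
    rw [hxz]; exact hz
  have hVbot : V N = ⊥ := hcnu (V N) hfW hadjV hisoV hsurjV
  have hptw : ∀ v : H, v ≠ 0 → ‖(f ^ N) v‖ < ‖v‖ := by
    intro v hv
    have hvnot : v ∉ V N := by
      rw [hVbot, Submodule.mem_bot]; exact hv
    rw [hmem] at hvnot
    push_neg at hvnot
    obtain ⟨n, hn, hne⟩ := hvnot
    have hlt : ‖(f ^ n) v‖ < ‖v‖ := lt_of_le_of_ne (hpow n v) hne
    have hle : ‖(f ^ N) v‖ ≤ ‖(f ^ n) v‖ := by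
      have hsplit : f ^ N = f ^ (N - n) * f ^ n := by
        rw [← pow_add]; congr 1; omega
      rw [hsplit, ContinuousLinearMap.mul_apply]
      exact hpow (N - n) _
    linarith
  obtain ⟨x0, hx0⟩ := exists_norm_eq H zero_le_one
  have hsne : (Metric.sphere (0 : H) 1).Nonempty :=
    ⟨x0, by rwa [mem_sphere_zero_iff_norm]⟩
  have hcont : ContinuousOn (fun v : H => ‖(f ^ N) v‖) (Metric.sphere 0 1) :=
    ((f ^ N).continuous.norm).continuousOn
  obtain ⟨v0, hv0mem, hv0max⟩ := (isCompact_sphere (0 : H) 1).exists_isMaxOn hsne hcont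
  have hv0norm : ‖v0‖ = 1 := mem_sphere_zero_iff_norm.mp hv0mem
  have hv0ne : v0 ≠ 0 := by
    intro h
    rw [h, norm_zero] at hv0norm
    norm_num at hv0norm
  have hmax : ∀ v : H, ‖v‖ = 1 → ‖(f ^ N) v‖ ≤ ‖(f ^ N) v0‖ := by
    intro v hv
    exact hv0max (mem_sphere_zero_iff_norm.mpr hv)
  have hop : ‖f ^ N‖ ≤ ‖(f ^ N) v0‖ := by
    apply opNorm_le_bound _ (norm_nonneg _)
    intro v
    rcases eq_or_ne v 0 with rfl | hv
    · simp
    · have hn0 : ‖v‖ ≠ 0 := norm_ne_zero_iff.mpr hv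
      have hu : ‖(‖v‖⁻¹ : ℝ) • v‖ = 1 := by
        rw [norm_smul, norm_inv, norm_norm, inv_mul_cancel₀ hn0]
      have hmu := hmax _ hu
      rw [map_smul_of_tower, norm_smul, norm_inv, norm_norm] at hmu
      have hpos : (0 : ℝ) < ‖v‖ := lt_of_le_of_ne (norm_nonneg v) (Ne.symm hn0)
      calc ‖(f ^ N) v‖ = ‖v‖ * (‖v‖⁻¹ * ‖(f ^ N) v‖) := by field_simp
      _ ≤ ‖v‖ * ‖(f ^ N) v0‖ := by
          apply mul_le_mul_of_nonneg_left hmu (norm_nonneg v)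
      _ = ‖(f ^ N) v0‖ * ‖v‖ := by ring
  have hfin := hptw v0 hv0ne
  rw [hv0norm] at hfin
  exact lt_of_le_of_lt hop hfin
end

section
/- (Sz.-Nagy–Foias canonical decomposition, finite-dimensional case) Every contraction f : H → H on a Hilbert space H has a unique reducing subspace H₀ such that f restricted to H₀ is unitary and f restricted to the orthogonal complement H₁ is completely nonunitary; moreover H₀ = {v ∈ H | ∀ n ∈ ℕ, ‖f^n(v)‖ = ‖v‖ = ‖(f†)^n(v)‖}. -/
open ContinuousLinearMap

section Aux

variable {H : Type*} [NormedAddCommGroup H] [InnerProductSpace ℂ H] [CompleteSpace H]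

private lemma aux_isom {g : H →L[ℂ] H} (hg : ∀ v, ‖g v‖ ≤ ‖v‖) {v : H} (h : ‖g v‖ = ‖v‖) :
    ContinuousLinearMap.adjoint g (g v) = v := by
  have hg1 : ‖g‖ ≤ 1 := g.opNorm_le_bound zero_le_one (by simpa using hg)
  have hga : ‖ContinuousLinearMap.adjoint g (g v)‖ ≤ ‖v‖ := by
    calc ‖ContinuousLinearMap.adjoint g (g v)‖ ≤ ‖ContinuousLinearMap.adjoint g‖ * ‖g v‖ :=
          (ContinuousLinearMap.adjoint g).le_opNorm _
      _ ≤ 1 * ‖v‖ := by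
          rw [h]
          exact mul_le_mul_of_nonneg_right (by rw [ContinuousLinearMap.adjoint.norm_map]; exact hg1)
            (norm_nonneg v)
      _ = ‖v‖ := one_mul _
  have hre : RCLike.re (inner (𝕜 := ℂ) (ContinuousLinearMap.adjoint g (g v)) v) = ‖v‖ ^ 2 := by
    rw [ContinuousLinearMap.adjoint_inner_left]
    rw [← h]
    exact_mod_cast congrArg RCLike.re (inner_self_eq_norm_sq_to_K (𝕜 := ℂ) (g v))
  have hsq := norm_sub_sq (𝕜 := ℂ) (ContinuousLinearMap.adjoint g (g v)) v
  have : ‖ContinuousLinearMap.adjoint g (g v) - v‖ ^ 2 ≤ 0 := by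
    rw [hsq, hre]
    nlinarith [norm_nonneg (ContinuousLinearMap.adjoint g (g v)), norm_nonneg v]
  have : ‖ContinuousLinearMap.adjoint g (g v) - v‖ = 0 := by
    nlinarith [norm_nonneg (ContinuousLinearMap.adjoint g (g v) - v)]
  rwa [norm_eq_zero, sub_eq_zero] at this

private lemma aux_pow_contr {f : H →L[ℂ] H} (hf : ∀ v, ‖f v‖ ≤ ‖v‖) (n : ℕ) (v : H) :
    ‖(f ^ n) v‖ ≤ ‖v‖ := by
  induction n generalizing v with
  | zero => simp
  | succ n ih =>
    rw [pow_succ, ContinuousLinearMap.mul_apply]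
    exact (ih (f v)).trans (hf v)

/-- Any closed subspace on which `f` is invariant, isometric and surjective is contained in
the set of vectors where all powers of `f` and `f†` are norm-preserving. -/
private lemma aux_sub {f : H →L[ℂ] H} (hf : ∀ v, ‖f v‖ ≤ ‖v‖) (K : Submodule ℂ H)
    (hKf : ∀ x ∈ K, f x ∈ K) (hKi : ∀ x ∈ K, ‖f x‖ = ‖x‖) (hKs : ∀ y ∈ K, ∃ x ∈ K, f x = y) :
    ∀ x ∈ K, ∀ n : ℕ, ‖(f ^ n) x‖ = ‖x‖ ∧ ‖(ContinuousLinearMap.adjoint f ^ n) x‖ = ‖x‖ := by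
  set g := ContinuousLinearMap.adjoint f with hg
  -- g maps K to K isometrically
  have hKg : ∀ x ∈ K, g x ∈ K ∧ ‖g x‖ = ‖x‖ := by
    intro x hx
    obtain ⟨y, hy, rfl⟩ := hKs x hx
    have hgy : g (f y) = y := aux_isom hf (hKi y hy)
    rw [hgy]
    exact ⟨hy, (hKi y hy).symm⟩
  intro x hx n
  constructor
  · induction n generalizing x with
    | zero => simp
    | succ n ih =>
      rw [pow_succ, ContinuousLinearMap.mul_apply]
      rw [ih (f x) (hKf x hx), hKi x hx]
  · induction n generalizing x with
    | zero => simp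
    | succ n ih =>
      rw [pow_succ, ContinuousLinearMap.mul_apply]
      rw [ih (g x) (hKg x hx).1, (hKg x hx).2]

end Aux

/-- Sz.-Nagy–Foias canonical decomposition: every contraction `f` on a Hilbert space `H`
has a unique closed reducing subspace `H₀` on which `f` restricts to a unitary and such that
the restriction of `f` to the orthogonal complement is completely nonunitary; moreover
`H₀ = {v | ∀ n, ‖fⁿ v‖ = ‖v‖ = ‖(f†)ⁿ v‖}`. -/
theorem stmt10 {H : Type*} [NormedAddCommGroup H] [InnerProductSpace ℂ H] [CompleteSpace H]
    (f : H →L[ℂ] H) (hf : ∀ v, ‖f v‖ ≤ ‖v‖) :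
    ∃ H₀ : Submodule ℂ H,
      (H₀ : Set H) =
        {v : H | ∀ n : ℕ, ‖(f ^ n) v‖ = ‖v‖ ∧ ‖(ContinuousLinearMap.adjoint f ^ n) v‖ = ‖v‖} ∧
      IsClosed (H₀ : Set H) ∧
      (∀ x ∈ H₀, f x ∈ H₀) ∧ (∀ x ∈ H₀, ContinuousLinearMap.adjoint f x ∈ H₀) ∧
      (∀ x ∈ H₀, ‖f x‖ = ‖x‖) ∧ (∀ y ∈ H₀, ∃ x ∈ H₀, f x = y) ∧
      (∀ K : Submodule ℂ H, IsClosed (K : Set H) → K ≤ H₀ᗮ →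
          (∀ x ∈ K, f x ∈ K) → (∀ x ∈ K, ContinuousLinearMap.adjoint f x ∈ K) →
          (∀ x ∈ K, ‖f x‖ = ‖x‖) → (∀ y ∈ K, ∃ x ∈ K, f x = y) → K = ⊥) ∧
      (∀ H₀' : Submodule ℂ H, IsClosed (H₀' : Set H) →
          (∀ x ∈ H₀', f x ∈ H₀') → (∀ x ∈ H₀', ContinuousLinearMap.adjoint f x ∈ H₀') →
          (∀ x ∈ H₀', ‖f x‖ = ‖x‖) → (∀ y ∈ H₀', ∃ x ∈ H₀', f x = y) →
          (∀ K : Submodule ℂ H, IsClosed (K : Set H) → K ≤ H₀'ᗮ →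
              (∀ x ∈ K, f x ∈ K) → (∀ x ∈ K, ContinuousLinearMap.adjoint f x ∈ K) →
              (∀ x ∈ K, ‖f x‖ = ‖x‖) → (∀ y ∈ K, ∃ x ∈ K, f x = y) → K = ⊥) →
          H₀' = H₀) := by
  classical
  set g := ContinuousLinearMap.adjoint f with hgdef
  have hf1 : ‖f‖ ≤ 1 := f.opNorm_le_bound zero_le_one (by simpa using hf)
  have hg : ∀ v, ‖g v‖ ≤ ‖v‖ := by
    intro v
    calc ‖g v‖ ≤ ‖g‖ * ‖v‖ := g.le_opNorm v
      _ ≤ 1 * ‖v‖ := mul_le_mul_of_nonneg_right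
          (by rw [hgdef, ContinuousLinearMap.adjoint.norm_map]; exact hf1) (norm_nonneg v)
      _ = ‖v‖ := one_mul _
  have hadj_pow : ∀ n : ℕ, ContinuousLinearMap.adjoint (f ^ n) = g ^ n := by
    intro n
    rw [hgdef, ← ContinuousLinearMap.star_eq_adjoint, ← ContinuousLinearMap.star_eq_adjoint,
      star_pow]
  have hadj_g : ContinuousLinearMap.adjoint g = f := ContinuousLinearMap.adjoint_adjoint f
  have hadj_gpow : ∀ n : ℕ, ContinuousLinearMap.adjoint (g ^ n) = f ^ n := by
    intro n
    rw [← ContinuousLinearMap.star_eq_adjoint, star_pow, ContinuousLinearMap.star_eq_adjoint,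
      hadj_g]
  -- define H₀
  set S : Submodule ℂ H := ⨅ n : ℕ,
      (LinearMap.ker (((g ^ n) * (f ^ n) - 1 : H →L[ℂ] H) : H →ₗ[ℂ] H) ⊓
        LinearMap.ker (((f ^ n) * (g ^ n) - 1 : H →L[ℂ] H) : H →ₗ[ℂ] H)) with hSdef
  have hmem : ∀ v : H, v ∈ S ↔
      ∀ n : ℕ, ‖(f ^ n) v‖ = ‖v‖ ∧ ‖(g ^ n) v‖ = ‖v‖ := by
    intro v
    rw [hSdef, Submodule.mem_iInf]
    apply forall_congr'
    intro n
    rw [Submodule.mem_inf, LinearMap.mem_ker, LinearMap.mem_ker]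
    simp only [ContinuousLinearMap.coe_coe, ContinuousLinearMap.sub_apply,
      ContinuousLinearMap.mul_apply, ContinuousLinearMap.one_apply]
    constructor
    · rintro ⟨h1, h2⟩
      rw [sub_eq_zero] at h1 h2
      constructor
      · refine le_antisymm (aux_pow_contr hf n v) ?_
        calc ‖v‖ = ‖(g ^ n) ((f ^ n) v)‖ := by rw [show (g ^ n) ((f ^ n) v) = v from h1]
          _ ≤ ‖(f ^ n) v‖ := aux_pow_contr hg n _
      · refine le_antisymm (aux_pow_contr hg n v) ?_
        calc ‖v‖ = ‖(f ^ n) ((g ^ n) v)‖ := by rw [show (f ^ n) ((g ^ n) v) = v from h2]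
          _ ≤ ‖(g ^ n) v‖ := aux_pow_contr hf n _
    · rintro ⟨h1, h2⟩
      rw [sub_eq_zero, sub_eq_zero]
      constructor
      · have := aux_isom (aux_pow_contr hf n) h1
        rwa [hadj_pow n] at this
      · have := aux_isom (aux_pow_contr hg n) h2
        rwa [hadj_gpow n] at this
  have hSset : (S : Set H) =
      {v : H | ∀ n : ℕ, ‖(f ^ n) v‖ = ‖v‖ ∧ ‖(g ^ n) v‖ = ‖v‖} := by
    ext v; exact hmem v
  have hSclosed : IsClosed (S : Set H) := by
    rw [hSdef, Submodule.coe_iInf]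
    refine isClosed_iInter fun n => ?_
    rw [Submodule.coe_inf]
    exact (ContinuousLinearMap.isClosed_ker _).inter (ContinuousLinearMap.isClosed_ker _)
  -- invariance of S under f
  have hinv : ∀ (h : H →L[ℂ] H), (∀ v, ‖h v‖ ≤ ‖v‖) → ∀ v,
      (∀ n : ℕ, ‖(h ^ n) v‖ = ‖v‖ ∧ ‖(ContinuousLinearMap.adjoint h ^ n) v‖ = ‖v‖) →
      (∀ n : ℕ, ‖(h ^ n) (h v)‖ = ‖h v‖ ∧ ‖(ContinuousLinearMap.adjoint h ^ n) (h v)‖ = ‖h v‖) := by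
    intro h hh v hv n
    have h1 : ‖h v‖ = ‖v‖ := by simpa [pow_one] using (hv 1).1
    have hkey : ContinuousLinearMap.adjoint h (h v) = v := aux_isom hh h1
    constructor
    · have : (h ^ n) (h v) = (h ^ (n + 1)) v := by
        rw [pow_succ, ContinuousLinearMap.mul_apply]
      rw [this, (hv (n + 1)).1, h1]
    · cases n with
      | zero => simp
      | succ m =>
        have : (ContinuousLinearMap.adjoint h ^ (m + 1)) (h v)
            = (ContinuousLinearMap.adjoint h ^ m) v := by
          rw [pow_succ, ContinuousLinearMap.mul_apply, hkey]
        rw [this, (hv m).2, h1]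
  have hSf : ∀ x ∈ S, f x ∈ S := by
    intro x hx
    rw [hmem] at hx ⊢
    exact hinv f hf x hx
  have hSg : ∀ x ∈ S, g x ∈ S := by
    intro x hx
    rw [hmem] at hx ⊢
    have hx' : ∀ n : ℕ, ‖(g ^ n) x‖ = ‖x‖ ∧ ‖(ContinuousLinearMap.adjoint g ^ n) x‖ = ‖x‖ := by
      intro n; rw [hadj_g]; exact ⟨(hx n).2, (hx n).1⟩
    have := hinv g hg x hx' 
    intro n
    have hn := this n
    rw [hadj_g] at hn
    exact ⟨hn.2, hn.1⟩
  have hSi : ∀ x ∈ S, ‖f x‖ = ‖x‖ := by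
    intro x hx
    rw [hmem] at hx
    simpa [pow_one] using (hx 1).1
  have hSs : ∀ y ∈ S, ∃ x ∈ S, f x = y := by
    intro y hy
    refine ⟨g y, hSg y hy, ?_⟩
    have h1 : ‖g y‖ = ‖y‖ := by
      rw [hmem] at hy; simpa [pow_one] using (hy 1).2
    have := aux_isom hg h1
    rwa [hadj_g] at this
  -- key: any invariant isometric surjective subspace is ≤ S
  have hle : ∀ K : Submodule ℂ H, (∀ x ∈ K, f x ∈ K) → (∀ x ∈ K, ‖f x‖ = ‖x‖) →
      (∀ y ∈ K, ∃ x ∈ K, f x = y) → K ≤ S := by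
    intro K hKf hKi hKs x hx
    rw [hmem]
    exact aux_sub hf K hKf hKi hKs x hx
  have hcnu : ∀ K : Submodule ℂ H, IsClosed (K : Set H) → K ≤ Sᗮ →
      (∀ x ∈ K, f x ∈ K) → (∀ x ∈ K, g x ∈ K) →
      (∀ x ∈ K, ‖f x‖ = ‖x‖) → (∀ y ∈ K, ∃ x ∈ K, f x = y) → K = ⊥ := by
    intro K _ hKo hKf _ hKi hKs
    have hKS : K ≤ S := hle K hKf hKi hKs
    rw [eq_bot_iff]
    intro x hx
    have h1 : x ∈ Sᗮ := hKo hx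
    have h2 : inner (𝕜 := ℂ) x x = 0 := h1 x (hKS hx)
    simpa using inner_self_eq_zero.mp h2
  refine ⟨S, ?_, hSclosed, hSf, hSg, hSi, hSs, hcnu, ?_⟩
  · rw [hSset]
  · -- uniqueness
    intro H₀' hc' hf' hg' hi' hs' hcnu'
    have hle1 : H₀' ≤ S := hle H₀' hf' hi' hs'
    -- K' := S ⊓ H₀'ᗮ satisfies the cnu hypotheses for H₀'
    set K' : Submodule ℂ H := S ⊓ H₀'ᗮ with hK'def
    have hK'f : ∀ x ∈ K', f x ∈ K' := by
      rintro x ⟨hxS, hxO⟩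
      refine ⟨hSf x hxS, ?_⟩
      intro u hu
      rw [← ContinuousLinearMap.adjoint_inner_left]
      exact hxO _ (hg' u hu)
    have hK'g : ∀ x ∈ K', g x ∈ K' := by
      rintro x ⟨hxS, hxO⟩
      refine ⟨hSg x hxS, ?_⟩
      intro u hu
      rw [hgdef, ContinuousLinearMap.adjoint_inner_right]
      exact hxO _ (hf' u hu)
    have hK'bot : K' = ⊥ := by
      apply hcnu' K'
      · rw [hK'def, Submodule.coe_inf]
        exact hSclosed.inter H₀'.isClosed_orthogonal
      · exact inf_le_right
      · exact hK'f
      · exact hK'g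
      · rintro x ⟨hxS, _⟩
        exact hSi x hxS
      · rintro y hy
        obtain ⟨hyS, hyO⟩ := hy
        refine ⟨g y, hK'g y ⟨hyS, hyO⟩, ?_⟩
        have h1 : ‖g y‖ = ‖y‖ := by
          have := ((hmem y).mp hyS 1).2
          simpa [pow_one] using this
        have := aux_isom hg h1
        rwa [hadj_g] at this
    have hle2 : S ≤ H₀' := by
      intro v hv
      have : CompleteSpace H₀' := hc'.completeSpace_coe
      obtain ⟨p, hp, q, hq, rfl⟩ := H₀'.exists_add_mem_mem_orthogonal v
      have hqS : q ∈ S := by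
        have : (p + q) - p ∈ S := Submodule.sub_mem S hv (hle1 hp)
        simpa using this
      have hq0 : q = 0 := by
        have : q ∈ K' := ⟨hqS, hq⟩
        rwa [hK'bot, Submodule.mem_bot] at this
      rw [hq0, add_zero]
      exact hp
    exact le_antisymm hle1 hle2
end

section
/- Let f : A ⊕ U → B ⊕ U be a contraction between finite-dimensional Hilbert spaces, and decompose U = U₀ ⊕ U₁ so that f_{UU} = f₀ ⊕ f₁ with f₀ unitary and f₁ completely nonunitary. Then f_{BU₀} = 0, f_{U₁U₀} = 0, f_{U₀A} = 0, f_{U₀U₁} = 0; consequently f_{UU}^k f_{UA} has range in U₁ for all k, and if U₁ ≠ {0} the series ∑_{k=0}^∞ ‖f_{UU}^k f_{UA}‖ converges with sum at most dim(U₁) · (1 − ‖f₁^{dim U₁}‖)⁻¹. -/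
open ContinuousLinearMap in
lemma aux_le_of_sq_le_sq {a b : ℝ} (ha : 0 ≤ a) (hb : 0 ≤ b) (h : a ^ 2 ≤ b ^ 2) : a ≤ b := by
  nlinarith

lemma aux_eq_of_sq_eq_sq {a b : ℝ} (ha : 0 ≤ a) (hb : 0 ≤ b) (h : a ^ 2 = b ^ 2) : a = b := by
  nlinarith [sq_nonneg (a - b), sq_nonneg (a + b)]

lemma aux_fst_norm_le {X Y : Type*} [NormedAddCommGroup X] [NormedAddCommGroup Y]
    (p : WithLp 2 (X × Y)) : ‖p.fst‖ ≤ ‖p‖ := by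
  refine aux_le_of_sq_le_sq (norm_nonneg _) (norm_nonneg _) ?_
  rw [WithLp.prod_norm_sq_eq_of_L2]
  nlinarith [sq_nonneg ‖p.snd‖]

lemma aux_snd_norm_le {X Y : Type*} [NormedAddCommGroup X] [NormedAddCommGroup Y]
    (p : WithLp 2 (X × Y)) : ‖p.snd‖ ≤ ‖p‖ := by
  refine aux_le_of_sq_le_sq (norm_nonneg _) (norm_nonneg _) ?_
  rw [WithLp.prod_norm_sq_eq_of_L2]
  nlinarith [sq_nonneg ‖p.fst‖]

lemma aux_norm_snd_of_fst_zero {X Y : Type*} [NormedAddCommGroup X] [NormedAddCommGroup Y]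
    (p : WithLp 2 (X × Y)) (h : p.fst = 0) : ‖p‖ = ‖p.snd‖ := by
  refine aux_eq_of_sq_eq_sq (norm_nonneg _) (norm_nonneg _) ?_
  rw [WithLp.prod_norm_sq_eq_of_L2, h]
  simp

open ContinuousLinearMap in
/-- For a contraction `S`, `S†S x = x` iff `‖S x‖ = ‖x‖`. -/
lemma aux_isom_iff {V : Type*} [NormedAddCommGroup V] [InnerProductSpace ℂ V]
    [FiniteDimensional ℂ V] (S : V →L[ℂ] V) (hS : ∀ y, ‖S y‖ ≤ ‖y‖) (x : V) :
    adjoint S (S x) = x ↔ ‖S x‖ = ‖x‖ := by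
  have hSnorm : ‖S‖ ≤ 1 := S.opNorm_le_bound zero_le_one (fun y => by simpa using hS y)
  constructor
  · intro h
    refine aux_eq_of_sq_eq_sq (norm_nonneg _) (norm_nonneg _) ?_
    rw [← inner_self_eq_norm_sq (𝕜 := ℂ), ← inner_self_eq_norm_sq (𝕜 := ℂ) x,
      ← ContinuousLinearMap.adjoint_inner_left, h]
  · intro h
    have hadj : ‖adjoint S (S x)‖ ≤ ‖S x‖ := by
      calc ‖adjoint S (S x)‖ ≤ ‖adjoint S‖ * ‖S x‖ := (adjoint S).le_opNorm _
        _ ≤ 1 * ‖S x‖ := by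
            have : ‖adjoint S‖ = ‖S‖ :=
              (LinearIsometryEquiv.norm_map ContinuousLinearMap.adjoint S)
            rw [this]; exact mul_le_mul_of_nonneg_right hSnorm (norm_nonneg _)
        _ = ‖S x‖ := one_mul _
    have hre : RCLike.re (inner (𝕜 := ℂ) (adjoint S (S x)) x) = ‖S x‖ ^ 2 := by
      rw [ContinuousLinearMap.adjoint_inner_left, inner_self_eq_norm_sq]
    have hexp := norm_sub_sq (𝕜 := ℂ) (adjoint S (S x)) x
    have : ‖adjoint S (S x) - x‖ ^ 2 ≤ 0 := by
      rw [hexp, hre]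
      nlinarith [norm_nonneg (adjoint S (S x)), norm_nonneg (S x)]
    have h0 : ‖adjoint S (S x) - x‖ = 0 := le_antisymm (by nlinarith [norm_nonneg (adjoint S (S x) - x)]) (norm_nonneg _)
    exact sub_eq_zero.mp (norm_eq_zero.mp h0)

open ContinuousLinearMap in
lemma aux_cnu_pow_norm_lt {V : Type*} [NormedAddCommGroup V] [InnerProductSpace ℂ V]
    [FiniteDimensional ℂ V] [Nontrivial V]
    (T : V →L[ℂ] V) (hT : ∀ x, ‖T x‖ ≤ ‖x‖)
    (hcnu : ∀ K : Submodule ℂ V,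
        (∀ x ∈ K, T x ∈ K) → (∀ x ∈ K, ContinuousLinearMap.adjoint T x ∈ K) →
        (∀ x ∈ K, ‖T x‖ = ‖x‖) → (∀ y ∈ K, ∃ x ∈ K, T x = y) → K = ⊥) :
    ‖T ^ Module.finrank ℂ V‖ < 1 := by
  have hTn : ∀ (n : ℕ) (x : V), ‖(T ^ n) x‖ ≤ ‖x‖ := by
    intro n
    induction n with
    | zero => intro x; simp
    | succ n ih =>
      intro x
      rw [pow_succ, ContinuousLinearMap.mul_apply]
      exact (ih (T x)).trans (hT x)
  set E : ℕ → Submodule ℂ V :=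
    fun n => LinearMap.ker (((ContinuousLinearMap.adjoint (T ^ n)) ∘L (T ^ n) - (1 : V →L[ℂ] V) : V →L[ℂ] V) : V →ₗ[ℂ] V) with hE
  have hmem : ∀ (n : ℕ) (x : V), x ∈ E n ↔ ‖(T ^ n) x‖ = ‖x‖ := by
    intro n x
    rw [hE]
    rw [LinearMap.mem_ker, ContinuousLinearMap.coe_coe]
    have : ((ContinuousLinearMap.adjoint (T ^ n)) ∘L (T ^ n) - (1 : V →L[ℂ] V)) x
        = (ContinuousLinearMap.adjoint (T ^ n)) ((T ^ n) x) - x := by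
      simp [ContinuousLinearMap.sub_apply]
    rw [this, sub_eq_zero]
    exact aux_isom_iff (T ^ n) (hTn n) x
  have hanti : ∀ {m n : ℕ}, m ≤ n → E n ≤ E m := by
    intro m n hmn x hx
    rw [hmem] at hx ⊢
    obtain ⟨k, rfl⟩ := Nat.exists_eq_add_of_le hmn
    rw [add_comm, pow_add, ContinuousLinearMap.mul_apply] at hx
    have h1 : ‖(T ^ k) ((T ^ m) x)‖ ≤ ‖(T ^ m) x‖ := hTn k _
    have h2 : ‖(T ^ m) x‖ ≤ ‖x‖ := hTn m x
    rw [hx] at h1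
    exact le_antisymm h2 h1
  have hT_mem : ∀ n, E n = E (n + 1) → ∀ x ∈ E n, T x ∈ E n ∧ ‖T x‖ = ‖x‖ := by
    intro n hEn x hx
    have hx1 : x ∈ E (n + 1) := hEn ▸ hx
    rw [hmem] at hx1
    rw [pow_succ, ContinuousLinearMap.mul_apply] at hx1
    have h1 : ‖(T ^ n) (T x)‖ ≤ ‖T x‖ := hTn n _
    have h2 : ‖T x‖ ≤ ‖x‖ := hT x
    have h3 : ‖T x‖ = ‖x‖ := le_antisymm h2 (hx1 ▸ h1)
    exact ⟨(hmem n (T x)).mpr (by rw [hx1, h3]), h3⟩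
  have hstab : ∀ n, E n = E (n + 1) → ∀ m, E (n + m) = E n := by
    intro n hEn m
    induction m with
    | zero => rfl
    | succ m ih =>
      refine le_antisymm (hanti (by omega)) ?_
      intro x hx
      obtain ⟨hTx, hTxn⟩ := hT_mem n hEn x hx
      have : T x ∈ E (n + m) := ih ▸ hTx
      rw [hmem] at this ⊢
      rw [show n + (m + 1) = (n + m) + 1 by omega, pow_succ,
        ContinuousLinearMap.mul_apply, this, hTxn]
  set d := Module.finrank ℂ V with hd
  have hEd : E d = ⊥ := by
    by_contra hbot
    have hexists : ∃ n < d, E n = E (n + 1) := by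
      by_contra hcon
      push_neg at hcon
      have hlt : ∀ n < d, E (n + 1) < E n := fun n hn =>
        lt_of_le_of_ne (hanti n.le_succ) (fun h => hcon n hn h.symm)
      have hrank : ∀ n ≤ d, Module.finrank ℂ (E n) + n ≤ d := by
        intro n hn
        induction n with
        | zero => simpa using Submodule.finrank_le (E 0)
        | succ n ih =>
          have h1 := Submodule.finrank_lt_finrank_of_lt (hlt n (by omega))
          have h2 := ih (by omega)
          omega
      have h0 : Module.finrank ℂ (E d) = 0 := by
        have := hrank d le_rfl
        omega
      exact hbot (Submodule.finrank_eq_zero.mp h0)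
    obtain ⟨n, hnd, hEn⟩ := hexists
    have hKT := hT_mem n hEn
    have hKsurj : ∀ y ∈ E n, ∃ x ∈ E n, T x = y := by
      have hres : ∀ x ∈ E n, T x ∈ E n := fun x hx => (hKT x hx).1
      set T' : E n →ₗ[ℂ] E n := (T : V →ₗ[ℂ] V).restrict hres with hT'
      have hinj : Function.Injective T' := by
        intro x y hxy
        have h1 : T (x : V) = T (y : V) := congrArg Subtype.val hxy
        have h2 : ‖T ((x : V) - y)‖ = ‖(x : V) - y‖ := (hKT _ (Submodule.sub_mem _ x.2 y.2)).2
        rw [map_sub, h1, sub_self, norm_zero] at h2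
        exact Subtype.ext (sub_eq_zero.mp (norm_eq_zero.mp h2.symm))
      have hsurj := LinearMap.injective_iff_surjective.mp hinj
      intro y hy
      obtain ⟨x, hx⟩ := hsurj ⟨y, hy⟩
      exact ⟨x, x.2, congrArg Subtype.val hx⟩
    have hKadj : ∀ x ∈ E n, ContinuousLinearMap.adjoint T x ∈ E n := by
      intro x hx
      obtain ⟨y, hy, hyx⟩ := hKsurj x hx
      have : ContinuousLinearMap.adjoint T (T y) = y :=
        (aux_isom_iff T hT y).mpr (hKT y hy).2
      rw [← hyx, this]
      exact hy
    have hKbot : E n = ⊥ :=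
      hcnu (E n) (fun x hx => (hKT x hx).1) hKadj (fun x hx => (hKT x hx).2) hKsurj
    have : E d = E n := by
      have := hstab n hEn (d - n)
      rwa [show n + (d - n) = d by omega] at this
    exact hbot (this.trans hKbot)
  have hstrict : ∀ x : V, x ≠ 0 → ‖(T ^ d) x‖ < ‖x‖ := by
    intro x hx
    rcases lt_or_eq_of_le (hTn d x) with h | h
    · exact h
    · exfalso
      have : x ∈ E d := (hmem d x).mpr h
      rw [hEd, Submodule.mem_bot] at this
      exact hx this
  -- norm attained on the sphere
  have hcpt : IsCompact (Metric.sphere (0 : V) 1) := isCompact_sphere 0 1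
  have hne : (Metric.sphere (0 : V) 1).Nonempty :=
    NormedSpace.sphere_nonempty.mpr zero_le_one
  have hcont : ContinuousOn (fun x : V => ‖(T ^ d) x‖) (Metric.sphere (0 : V) 1) :=
    ((T ^ d).continuous.norm).continuousOn
  obtain ⟨x0, hx0mem, hx0max⟩ := hcpt.exists_isMaxOn hne hcont
  have hx0norm : ‖x0‖ = 1 := mem_sphere_zero_iff_norm.mp hx0mem
  have hbound : ‖T ^ d‖ ≤ ‖(T ^ d) x0‖ := by
    refine (T ^ d).opNorm_le_bound (norm_nonneg _) (fun x => ?_)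
    rcases eq_or_ne x 0 with rfl | hx
    · simp
    · have hxn : ‖x‖ ≠ 0 := norm_ne_zero_iff.mpr hx
      set u := ((‖x‖⁻¹ : ℝ) : ℂ) • x with hu
      have hun : ‖u‖ = 1 := by
        rw [hu, norm_smul, Complex.norm_real, norm_inv, norm_norm, inv_mul_cancel₀ hxn]
      have hmem' : u ∈ Metric.sphere (0 : V) 1 := mem_sphere_zero_iff_norm.mpr hun
      have h1 : ‖(T ^ d) u‖ ≤ ‖(T ^ d) x0‖ := hx0max hmem'
      have h2 : ‖(T ^ d) u‖ = ‖x‖⁻¹ * ‖(T ^ d) x‖ := by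
        rw [hu, map_smul, norm_smul, Complex.norm_real, norm_inv, norm_norm]
      rw [h2] at h1
      have hxpos : (0 : ℝ) < ‖x‖ := lt_of_le_of_ne (norm_nonneg _) (Ne.symm hxn)
      calc ‖(T ^ d) x‖ = ‖x‖ * (‖x‖⁻¹ * ‖(T ^ d) x‖) := by field_simp
        _ ≤ ‖x‖ * ‖(T ^ d) x0‖ := mul_le_mul_of_nonneg_left h1 (norm_nonneg _)
        _ = ‖(T ^ d) x0‖ * ‖x‖ := mul_comm _ _
  have hx0ne : x0 ≠ 0 := by
    intro h
    rw [h, norm_zero] at hx0norm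
    exact zero_ne_one hx0norm
  calc ‖T ^ d‖ ≤ ‖(T ^ d) x0‖ := hbound
    _ < ‖x0‖ := hstrict x0 hx0ne
    _ = 1 := hx0norm

/-- Let `f : A ⊕ U → B ⊕ U` be a contraction of finite-dimensional Hilbert spaces with
`U = U₀ ⊕ U₁`, where `f_{UU}` decomposes as `f₀ ⊕ f₁` with `f₀` (the `U₀U₀`-block) unitary and
`f₁` (the `U₁U₁`-block) completely nonunitary.  Then `f_{BU₀} = 0`, `f_{U₁U₀} = 0`,
`f_{U₀A} = 0`, `f_{U₀U₁} = 0`; consequently `f_{UU}ᵏ f_{UA}` has range in `U₁` for all `k`,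
and if `U₁ ≠ {0}` the series `∑ ‖f_{UU}ᵏ f_{UA}‖` converges with sum at most
`dim U₁ · (1 − ‖f₁^(dim U₁)‖)⁻¹`. -/
theorem stmt11 {A B U₀ U₁ : Type*}
    [NormedAddCommGroup A] [InnerProductSpace ℂ A] [FiniteDimensional ℂ A]
    [NormedAddCommGroup B] [InnerProductSpace ℂ B] [FiniteDimensional ℂ B]
    [NormedAddCommGroup U₀] [InnerProductSpace ℂ U₀] [FiniteDimensional ℂ U₀]
    [NormedAddCommGroup U₁] [InnerProductSpace ℂ U₁] [FiniteDimensional ℂ U₁]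
    (f : WithLp 2 (A × WithLp 2 (U₀ × U₁)) →L[ℂ] WithLp 2 (B × WithLp 2 (U₀ × U₁)))
    (hf : ∀ v, ‖f v‖ ≤ ‖v‖)
    (fBA : A →L[ℂ] B) (fBU : WithLp 2 (U₀ × U₁) →L[ℂ] B)
    (fUA : A →L[ℂ] WithLp 2 (U₀ × U₁))
    (fUU : WithLp 2 (U₀ × U₁) →L[ℂ] WithLp 2 (U₀ × U₁))
    (hblock : ∀ (x : A) (u : WithLp 2 (U₀ × U₁)),
        f ((WithLp.equiv 2 (A × WithLp 2 (U₀ × U₁))).symm (x, u))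
          = (WithLp.equiv 2 (B × WithLp 2 (U₀ × U₁))).symm (fBA x + fBU u, fUA x + fUU u))
    (f00 : U₀ →L[ℂ] U₀) (f01 : U₁ →L[ℂ] U₀) (f10 : U₀ →L[ℂ] U₁) (f11 : U₁ →L[ℂ] U₁)
    (hUU : ∀ (u0 : U₀) (u1 : U₁),
        fUU ((WithLp.equiv 2 (U₀ × U₁)).symm (u0, u1))
          = (WithLp.equiv 2 (U₀ × U₁)).symm (f00 u0 + f01 u1, f10 u0 + f11 u1))
    (hf00_iso : ∀ u : U₀, ‖f00 u‖ = ‖u‖) (hf00_surj : Function.Surjective f00)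
    (hf11_cnu : ∀ K : Submodule ℂ U₁,
        (∀ x ∈ K, f11 x ∈ K) → (∀ x ∈ K, ContinuousLinearMap.adjoint f11 x ∈ K) →
        (∀ x ∈ K, ‖f11 x‖ = ‖x‖) → (∀ y ∈ K, ∃ x ∈ K, f11 x = y) → K = ⊥) :
    (∀ u0 : U₀, fBU ((WithLp.equiv 2 (U₀ × U₁)).symm (u0, 0)) = 0) ∧
    (∀ u0 : U₀, (WithLp.equiv 2 (U₀ × U₁) (fUU ((WithLp.equiv 2 (U₀ × U₁)).symm (u0, 0)))).2 = 0) ∧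
    (∀ x : A, (WithLp.equiv 2 (U₀ × U₁) (fUA x)).1 = 0) ∧
    (∀ u1 : U₁, (WithLp.equiv 2 (U₀ × U₁) (fUU ((WithLp.equiv 2 (U₀ × U₁)).symm (0, u1)))).1 = 0) ∧
    (∀ (k : ℕ) (x : A), (WithLp.equiv 2 (U₀ × U₁) ((fUU ^ k) (fUA x))).1 = 0) ∧
    (Nontrivial U₁ →
      Summable (fun k : ℕ => ‖(fUU ^ k) ∘L fUA‖) ∧
      ∑' k : ℕ, ‖(fUU ^ k) ∘L fUA‖
        ≤ (Module.finrank ℂ U₁ : ℝ) * (1 - ‖f11 ^ Module.finrank ℂ U₁‖)⁻¹) := by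
  set eU := WithLp.equiv 2 (U₀ × U₁) with heU
  set eAU := WithLp.equiv 2 (A × WithLp 2 (U₀ × U₁)) with heAU
  set eBU := WithLp.equiv 2 (B × WithLp 2 (U₀ × U₁)) with heBU
  -- norm of a vector built from a pair
  have hnormAU : ∀ (x : A) (u : WithLp 2 (U₀ × U₁)),
      ‖eAU.symm (x, u)‖ ^ 2 = ‖x‖ ^ 2 + ‖u‖ ^ 2 := by
    intro x u
    rw [WithLp.prod_norm_sq_eq_of_L2]
    simp [heAU]
  have hnormU : ∀ (u0 : U₀) (u1 : U₁),
      ‖eU.symm (u0, u1)‖ ^ 2 = ‖u0‖ ^ 2 + ‖u1‖ ^ 2 := by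
    intro u0 u1
    rw [WithLp.prod_norm_sq_eq_of_L2]
    simp [heU]
  -- Parts 1 and 2
  have h12 : ∀ u0 : U₀, fBU (eU.symm (u0, 0)) = 0 ∧ f10 u0 = 0 := by
    intro u0
    have hfv := hf (eAU.symm (0, eU.symm (u0, 0)))
    rw [hblock 0 (eU.symm (u0, 0))] at hfv
    simp only [map_zero, zero_add] at hfv
    have h1 : ‖eBU.symm (fBU (eU.symm (u0, 0)), fUU (eU.symm (u0, 0)))‖ ^ 2
        = ‖fBU (eU.symm (u0, 0))‖ ^ 2 + ‖fUU (eU.symm (u0, 0))‖ ^ 2 := by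
      rw [WithLp.prod_norm_sq_eq_of_L2]; simp [heBU]
    have h2 : ‖fUU (eU.symm (u0, 0))‖ ^ 2 = ‖f00 u0‖ ^ 2 + ‖f10 u0‖ ^ 2 := by
      rw [hUU u0 0]
      simp only [map_zero, add_zero]
      exact hnormU _ _
    have h3 : ‖eAU.symm ((0 : A), eU.symm (u0, 0))‖ ^ 2 = ‖u0‖ ^ 2 := by
      rw [hnormAU, hnormU]
      simp
    have hsq : ‖eBU.symm (fBU (eU.symm (u0, 0)), fUU (eU.symm (u0, 0)))‖ ^ 2
        ≤ ‖eAU.symm ((0 : A), eU.symm (u0, 0))‖ ^ 2 :=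
      pow_le_pow_left₀ (norm_nonneg _) hfv 2
    rw [h1, h2, h3, hf00_iso u0] at hsq
    constructor
    · have : ‖fBU (eU.symm (u0, 0))‖ = 0 := by nlinarith [norm_nonneg (fBU (eU.symm (u0, 0))), norm_nonneg (f10 u0), sq_nonneg ‖f10 u0‖]
      exact norm_eq_zero.mp this
    · have : ‖f10 u0‖ = 0 := by nlinarith [norm_nonneg (fBU (eU.symm (u0, 0))), norm_nonneg (f10 u0), sq_nonneg ‖fBU (eU.symm (u0, 0))‖]
      exact norm_eq_zero.mp this
  -- the column trick
  have hcol : ∀ (x : A) (u1 : U₁), (eU (fUA x)).1 + f01 u1 = 0 := by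
    intro x u1
    have key : ∀ n : ℕ, (2 * (n : ℝ) + 1) * ‖(eU (fUA x)).1 + f01 u1‖ ^ 2
        ≤ ‖x‖ ^ 2 + ‖u1‖ ^ 2 := by
      intro n
      set w := (eU (fUA x)).1 + f01 u1 with hwdef
      obtain ⟨z, hz⟩ := hf00_surj (((n : ℝ) : ℂ) • w)
      have hzn : ‖z‖ = (n : ℝ) * ‖w‖ := by
        rw [← hf00_iso z, hz, norm_smul, Complex.norm_real]
        simp
      have hfv := hf (eAU.symm (x, eU.symm (z, u1)))
      rw [hblock x (eU.symm (z, u1))] at hfv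
      set P := fUA x + fUU (eU.symm (z, u1)) with hP
      have hP1 : (eU P).1 = (1 + ((n : ℝ) : ℂ)) • w := by
        have : (eU P).1 = (eU (fUA x)).1 + (eU (fUU (eU.symm (z, u1)))).1 := rfl
        rw [this, hUU z u1]
        have : (eU (eU.symm (f00 z + f01 u1, f10 z + f11 u1))).1 = f00 z + f01 u1 := by
          simp [heU]
        rw [this, hz, hwdef]
        module
      have hlow : ‖(eU P).1‖ ≤ ‖eAU.symm (x, eU.symm (z, u1))‖ := by
        have h1 : ‖(eU P).1‖ ≤ ‖P‖ := aux_fst_norm_le P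
        have h2 : ‖P‖ ≤ ‖eBU.symm (fBA x + fBU (eU.symm (z, u1)), P)‖ := by
          have := aux_snd_norm_le (eBU.symm (fBA x + fBU (eU.symm (z, u1)), P))
          simpa [heBU] using this
        exact (h1.trans h2).trans hfv
      have hPnorm : ‖(eU P).1‖ = (1 + (n : ℝ)) * ‖w‖ := by
        rw [hP1, norm_smul]
        congr 1
        have : (1 + ((n : ℝ) : ℂ)) = (((1 + (n : ℝ)) : ℝ) : ℂ) := by push_cast; ring
        rw [this, Complex.norm_real, Real.norm_eq_abs, abs_of_nonneg (by positivity)]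
      have hup : ‖eAU.symm (x, eU.symm (z, u1))‖ ^ 2
          = ‖x‖ ^ 2 + ((n : ℝ) * ‖w‖) ^ 2 + ‖u1‖ ^ 2 := by
        rw [hnormAU, hnormU, hzn]; ring
      have hsq := pow_le_pow_left₀ (norm_nonneg _) hlow 2
      rw [hPnorm, hup] at hsq
      nlinarith [norm_nonneg w]
    by_contra hne
    have hwpos : 0 < ‖(eU (fUA x)).1 + f01 u1‖ ^ 2 :=
      pow_pos (norm_pos_iff.mpr hne) 2
    obtain ⟨n, hn⟩ := exists_nat_gt ((‖x‖ ^ 2 + ‖u1‖ ^ 2) / ‖(eU (fUA x)).1 + f01 u1‖ ^ 2)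
    have := key n
    rw [div_lt_iff₀ hwpos] at hn
    nlinarith
  have h3 : ∀ x : A, (eU (fUA x)).1 = 0 := by
    intro x
    have := hcol x 0
    simpa using this
  have h4' : ∀ u1 : U₁, f01 u1 = 0 := by
    intro u1
    have := hcol 0 u1
    simpa [heU] using this
  have h4 : ∀ u1 : U₁, (eU (fUU (eU.symm (0, u1)))).1 = 0 := by
    intro u1
    rw [hUU 0 u1]
    have : (eU (eU.symm (f00 0 + f01 u1, f10 0 + f11 u1))).1 = f00 0 + f01 u1 := by
      simp [heU]
    rw [this, map_zero, zero_add]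
    exact h4' u1
  -- iterates stay in U₁
  have h5 : ∀ (k : ℕ) (v : WithLp 2 (U₀ × U₁)), (eU v).1 = 0 →
      (eU ((fUU ^ k) v)).1 = 0 ∧ (eU ((fUU ^ k) v)).2 = (f11 ^ k) ((eU v).2) := by
    intro k
    induction k with
    | zero => intro v hv; exact ⟨by simpa using hv, by simp⟩
    | succ k ih =>
      intro v hv
      obtain ⟨ih1, ih2⟩ := ih v hv
      set q := (fUU ^ k) v with hq
      have hqeq : q = eU.symm (0, (eU q).2) := by
        apply (WithLp.equiv 2 (U₀ × U₁)).injective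
        apply Prod.ext
        · simpa [heU] using ih1
        · simp [heU]
      have hstep : (fUU ^ (k + 1)) v = fUU q := by
        rw [pow_succ', ContinuousLinearMap.mul_apply]
      rw [hstep, hqeq, hUU 0 ((eU q).2)]
      constructor
      · have : (eU (eU.symm (f00 0 + f01 (eU q).2, f10 0 + f11 (eU q).2))).1
            = f00 0 + f01 (eU q).2 := by simp [heU]
        rw [this, map_zero, zero_add]
        exact h4' _
      · have : (eU (eU.symm (f00 0 + f01 (eU q).2, f10 0 + f11 (eU q).2))).2
            = f10 0 + f11 (eU q).2 := by simp [heU]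
        rw [this, map_zero, zero_add, ih2, ← ContinuousLinearMap.mul_apply, ← pow_succ']
  -- contraction facts
  have hfUA : ∀ x : A, ‖fUA x‖ ≤ ‖x‖ := by
    intro x
    have hfv := hf (eAU.symm (x, 0))
    rw [hblock x 0] at hfv
    simp only [map_zero, add_zero] at hfv
    have h1 : ‖fUA x‖ ≤ ‖eBU.symm (fBA x, fUA x)‖ := by
      have := aux_snd_norm_le (eBU.symm (fBA x, fUA x))
      simpa [heBU] using this
    have h2 : ‖eAU.symm (x, (0 : WithLp 2 (U₀ × U₁)))‖ = ‖x‖ := by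
      refine aux_eq_of_sq_eq_sq (norm_nonneg _) (norm_nonneg _) ?_
      rw [hnormAU]; simp
    calc ‖fUA x‖ ≤ ‖eBU.symm (fBA x, fUA x)‖ := h1
      _ ≤ ‖eAU.symm (x, (0 : WithLp 2 (U₀ × U₁)))‖ := hfv
      _ = ‖x‖ := h2
  have hUUc : ∀ u : WithLp 2 (U₀ × U₁), ‖fUU u‖ ≤ ‖u‖ := by
    intro u
    have hfv := hf (eAU.symm (0, u))
    rw [hblock 0 u] at hfv
    simp only [map_zero, zero_add] at hfv
    have h1 : ‖fUU u‖ ≤ ‖eBU.symm (fBU u, fUU u)‖ := by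
      have := aux_snd_norm_le (eBU.symm (fBU u, fUU u))
      simpa [heBU] using this
    have h2 : ‖eAU.symm ((0 : A), u)‖ = ‖u‖ := by
      refine aux_eq_of_sq_eq_sq (norm_nonneg _) (norm_nonneg _) ?_
      rw [hnormAU]; simp
    calc ‖fUU u‖ ≤ ‖eBU.symm (fBU u, fUU u)‖ := h1
      _ ≤ ‖eAU.symm ((0 : A), u)‖ := hfv
      _ = ‖u‖ := h2
  have hUU01 : ∀ u1 : U₁, fUU (eU.symm (0, u1)) = eU.symm (0, f11 u1) := by
    intro u1
    rw [hUU 0 u1]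
    have : (f00 0 + f01 u1, f10 0 + f11 u1) = ((0 : U₀), f11 u1) := by
      rw [map_zero, map_zero, zero_add, zero_add, h4' u1]
    rw [this]
  have hf11 : ∀ u1 : U₁, ‖f11 u1‖ ≤ ‖u1‖ := by
    intro u1
    have h1 : ‖fUU (eU.symm (0, u1))‖ = ‖f11 u1‖ := by
      rw [hUU01 u1]
      have := aux_norm_snd_of_fst_zero (eU.symm ((0 : U₀), f11 u1)) (by simp [heU])
      simpa [heU] using this
    have h2 : ‖eU.symm ((0 : U₀), u1)‖ = ‖u1‖ := by
      have := aux_norm_snd_of_fst_zero (eU.symm ((0 : U₀), u1)) (by simp [heU])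
      simpa [heU] using this
    rw [← h1, ← h2]
    exact hUUc _
  refine ⟨fun u0 => (h12 u0).1, ?_, h3, h4, ?_, ?_⟩
  · intro u0
    rw [hUU u0 0]
    have : (eU (eU.symm (f00 u0 + f01 0, f10 u0 + f11 0))).2 = f10 u0 + f11 0 := by
      simp [heU]
    rw [this, map_zero, add_zero]
    exact (h12 u0).2
  · intro k x
    exact (h5 k (fUA x) (h3 x)).1
  · intro hNT
    haveI := hNT
    set d := Module.finrank ℂ U₁ with hd
    set c := ‖f11 ^ d‖ with hc
    have hc1 : c < 1 := aux_cnu_pow_norm_lt f11 hf11 hf11_cnu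
    have hc0 : (0 : ℝ) ≤ c := norm_nonneg _
    have h11n : ∀ (n : ℕ) (y : U₁), ‖(f11 ^ n) y‖ ≤ ‖y‖ := by
      intro n
      induction n with
      | zero => intro y; simp
      | succ n ih =>
        intro y
        rw [pow_succ, ContinuousLinearMap.mul_apply]
        exact (ih (f11 y)).trans (hf11 y)
    have hckd : ∀ k : ℕ, ‖f11 ^ k‖ ≤ c ^ (k / d) := by
      intro k
      conv_lhs => rw [← Nat.div_add_mod k d]
      rw [pow_add, pow_mul]
      have hmod : ‖f11 ^ (k % d)‖ ≤ 1 :=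
        (f11 ^ (k % d)).opNorm_le_bound zero_le_one (fun y => by simpa using h11n (k % d) y)
      calc ‖(f11 ^ d) ^ (k / d) * f11 ^ (k % d)‖
          ≤ ‖(f11 ^ d) ^ (k / d)‖ * ‖f11 ^ (k % d)‖ := norm_mul_le _ _
        _ ≤ c ^ (k / d) * 1 := by
            refine mul_le_mul (norm_pow_le _ _) hmod (norm_nonneg _) (pow_nonneg hc0 _)
        _ = c ^ (k / d) := mul_one _
    have ha : ∀ k : ℕ, ‖(fUU ^ k) ∘L fUA‖ ≤ c ^ (k / d) := by
      intro k
      refine ContinuousLinearMap.opNorm_le_bound _ (pow_nonneg hc0 _) (fun x => ?_)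
      have h51 := (h5 k (fUA x) (h3 x)).1
      have h52 := (h5 k (fUA x) (h3 x)).2
      simp only [heU, WithLp.equiv_apply, WithLp.ofLp_fst, WithLp.ofLp_snd] at h51 h52
      rw [ContinuousLinearMap.comp_apply]
      have hnorm : ‖(fUU ^ k) (fUA x)‖ = ‖(f11 ^ k) ((fUA x).snd)‖ := by
        rw [aux_norm_snd_of_fst_zero _ h51, h52]
      rw [hnorm]
      calc ‖(f11 ^ k) ((fUA x).snd)‖ ≤ ‖f11 ^ k‖ * ‖(fUA x).snd‖ := (f11 ^ k).le_opNorm _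
        _ ≤ c ^ (k / d) * ‖x‖ := by
            refine mul_le_mul (hckd k) ((aux_snd_norm_le (fUA x)).trans (hfUA x))
              (norm_nonneg _) (pow_nonneg hc0 _)
    haveI : NeZero d := ⟨(Module.finrank_pos (R := ℂ) (M := U₁)).ne'⟩
    set g : ℕ → ℝ := fun k => c ^ (k / d) with hg
    have hfe : (fun p : ℕ × Fin d => g ((Nat.divModEquiv d).symm p))
        = fun p : ℕ × Fin d => c ^ p.1 := by
      funext p
      have hdiv : (p.1 * d + (p.2 : ℕ)) / d = p.1 := by
        rw [mul_comm, Nat.mul_add_div (Nat.pos_of_neZero d), Nat.div_eq_of_lt p.2.isLt,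
          add_zero]
      simp [hg, Nat.divModEquiv, hdiv]
    have hsum : Summable (fun p : ℕ × Fin d => c ^ p.1) := by
      refine (summable_prod_of_nonneg ?_).mpr ⟨fun q => Summable.of_finite, ?_⟩
      · intro p; exact pow_nonneg hc0 _
      · have : (fun q : ℕ => ∑' _ : Fin d, c ^ q) = fun q : ℕ => (d : ℝ) * c ^ q := by
          funext q
          rw [tsum_fintype]
          simp [Finset.sum_const, nsmul_eq_mul]
        simpa [this] using (summable_geometric_of_lt_one hc0 hc1).mul_left (d : ℝ)
    have hgs : Summable g := by
      rw [← (Nat.divModEquiv d).symm.summable_iff]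
      have : (g ∘ (Nat.divModEquiv d).symm) = fun p : ℕ × Fin d => c ^ p.1 := by
        funext p
        exact congrFun hfe p
      rw [this]
      exact hsum
    have htsum : ∑' k, g k = (d : ℝ) * (1 - c)⁻¹ := by
      rw [← Equiv.tsum_eq ((Nat.divModEquiv d).symm) g]
      calc ∑' p : ℕ × Fin d, g ((Nat.divModEquiv d).symm p)
          = ∑' p : ℕ × Fin d, c ^ p.1 := by rw [hfe]
        _ = ∑' (q : ℕ) (_ : Fin d), c ^ q := hsum.tsum_prod
        _ = ∑' q : ℕ, (d : ℝ) * c ^ q := by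
            congr 1
            funext q
            rw [tsum_fintype]
            simp [Finset.sum_const, nsmul_eq_mul]
        _ = (d : ℝ) * ∑' q : ℕ, c ^ q := tsum_mul_left
        _ = (d : ℝ) * (1 - c)⁻¹ := by rw [tsum_geometric_of_lt_one hc0 hc1]
    have hsummable : Summable (fun k : ℕ => ‖(fUU ^ k) ∘L fUA‖) :=
      Summable.of_nonneg_of_le (fun k => ContinuousLinearMap.opNorm_nonneg _) ha hgs
    refine ⟨hsummable, ?_⟩
    calc ∑' k : ℕ, ‖(fUU ^ k) ∘L fUA‖ ≤ ∑' k, g k := Summable.tsum_le_tsum ha hsummable hgs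
      _ = (d : ℝ) * (1 - c)⁻¹ := htsum
end

section
/- Let f : A ⊕ U → B ⊕ U be a contraction between finite-dimensional complex Hilbert spaces. Then there exist linear maps i : A → U and k : U → B such that f_{UA} = (id − f_{UU}) ∘ i and f_{BU} = k ∘ (id − f_{UU}). Equivalently, im(f_{UA}) ⊆ im(id − f_{UU}) and ker(id − f_{UU}) ⊆ ker(f_{BU}). -/
open ContinuousLinearMap in
/-- If a contraction's `UU` block fixes `u`, then the `BU` block kills `u`. -/
lemma stmt12_aux {A U B : Type*}
    [NormedAddCommGroup A] [InnerProductSpace ℂ A]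
    [NormedAddCommGroup U] [InnerProductSpace ℂ U]
    [NormedAddCommGroup B] [InnerProductSpace ℂ B]
    (f : WithLp 2 (A × U) →L[ℂ] WithLp 2 (B × U))
    (fBA : A →L[ℂ] B) (fBU : U →L[ℂ] B) (fUA : A →L[ℂ] U) (fUU : U →L[ℂ] U)
    (hblock : ∀ (x : A) (u : U),
        f ((WithLp.equiv 2 (A × U)).symm (x, u))
          = (WithLp.equiv 2 (B × U)).symm (fBA x + fBU u, fUA x + fUU u))
    (hf : ∀ v, ‖f v‖ ≤ ‖v‖) (u : U) (hu : fUU u = u) : fBU u = 0 := by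
  have h := hf ((WithLp.equiv 2 (A × U)).symm (0, u))
  rw [hblock 0 u] at h
  simp only [map_zero, zero_add, hu] at h
  rw [WithLp.equiv_symm_apply (V := A × U), WithLp.norm_toLp_snd] at h
  have h2 : ‖(WithLp.equiv 2 (B × U)).symm (fBU u, u)‖ ^ 2 = ‖fBU u‖ ^ 2 + ‖u‖ ^ 2 := by
    rw [WithLp.equiv_symm_apply, WithLp.prod_norm_sq_eq_of_L2, WithLp.toLp_fst, WithLp.toLp_snd]
  have h3 : ‖fBU u‖ ^ 2 + ‖u‖ ^ 2 ≤ ‖u‖ ^ 2 := by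
    rw [← h2]
    exact pow_le_pow_left₀ (norm_nonneg _) h 2
  have h4 : ‖fBU u‖ ^ 2 ≤ 0 := by linarith
  have h5 : ‖fBU u‖ = 0 := by nlinarith [norm_nonneg (fBU u), sq_nonneg ‖fBU u‖]
  exact norm_eq_zero.mp h5

/-- For a contraction `f : A ⊕ U → B ⊕ U` between finite-dimensional complex Hilbert spaces
with blocks `f_{BA}, f_{BU}, f_{UA}, f_{UU}`, there exist linear maps `i : A → U` and
`k : U → B` with `f_{UA} = (id − f_{UU}) ∘ i` and `f_{BU} = k ∘ (id − f_{UU})`; equivalently,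
`im(f_{UA}) ⊆ im(id − f_{UU})` and `ker(id − f_{UU}) ⊆ ker(f_{BU})`. -/
theorem stmt12 {A U B : Type*}
    [NormedAddCommGroup A] [InnerProductSpace ℂ A] [FiniteDimensional ℂ A]
    [NormedAddCommGroup U] [InnerProductSpace ℂ U] [FiniteDimensional ℂ U]
    [NormedAddCommGroup B] [InnerProductSpace ℂ B] [FiniteDimensional ℂ B]
    (f : WithLp 2 (A × U) →L[ℂ] WithLp 2 (B × U))
    (fBA : A →L[ℂ] B) (fBU : U →L[ℂ] B) (fUA : A →L[ℂ] U) (fUU : U →L[ℂ] U)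
    (hblock : ∀ (x : A) (u : U),
        f ((WithLp.equiv 2 (A × U)).symm (x, u))
          = (WithLp.equiv 2 (B × U)).symm (fBA x + fBU u, fUA x + fUU u))
    (hf : ∀ v, ‖f v‖ ≤ ‖v‖) :
    (∃ i : A →L[ℂ] U, fUA = (1 - fUU) ∘L i) ∧
    (∃ k : U →L[ℂ] B, fBU = k ∘L (1 - fUU)) ∧
    LinearMap.range (fUA : A →ₗ[ℂ] U) ≤ LinearMap.range (((1 - fUU : U →L[ℂ] U)) : U →ₗ[ℂ] U) ∧
    LinearMap.ker (((1 - fUU : U →L[ℂ] U)) : U →ₗ[ℂ] U) ≤ LinearMap.ker (fBU : U →ₗ[ℂ] B) := by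
  classical
  set T : U →L[ℂ] U := 1 - fUU with hT
  -- kernel inclusion
  have hker : LinearMap.ker (T : U →ₗ[ℂ] U) ≤ LinearMap.ker (fBU : U →ₗ[ℂ] B) := by
    intro u hu
    have hu' : fUU u = u := by
      have : T u = 0 := hu
      simp only [hT, ContinuousLinearMap.sub_apply, ContinuousLinearMap.one_apply,
        sub_eq_zero] at this
      exact this.symm
    exact stmt12_aux f fBA fBU fUA fUU hblock hf u hu'
  -- adjoint of f is a contraction with adjoint blocks
  have hfnorm : ‖f‖ ≤ 1 := f.opNorm_le_bound zero_le_one (by simpa using hf)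
  set g := ContinuousLinearMap.adjoint f with hg
  have hgblock : ∀ (y : B) (w : U),
      g ((WithLp.equiv 2 (B × U)).symm (y, w))
        = (WithLp.equiv 2 (A × U)).symm
            (ContinuousLinearMap.adjoint fBA y + ContinuousLinearMap.adjoint fUA w,
             ContinuousLinearMap.adjoint fBU y + ContinuousLinearMap.adjoint fUU w) := by
    intro y w
    apply ext_inner_right ℂ
    intro z
    have hz : z = (WithLp.equiv 2 (A × U)).symm (z.fst, z.snd) := rfl
    rw [hg, ContinuousLinearMap.adjoint_inner_left, hz, hblock z.fst z.snd]
    simp only [WithLp.prod_inner_apply, WithLp.equiv_symm_apply, WithLp.ofLp_toLp,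
      inner_add_left, inner_add_right, ContinuousLinearMap.adjoint_inner_left]
    ring
  have hgnorm : ∀ v, ‖g v‖ ≤ ‖v‖ := by
    intro v
    calc ‖g v‖ ≤ ‖g‖ * ‖v‖ := g.le_opNorm v
    _ ≤ 1 * ‖v‖ := by
        apply mul_le_mul_of_nonneg_right _ (norm_nonneg v)
        rw [hg, LinearIsometryEquiv.norm_map ContinuousLinearMap.adjoint f]
        exact hfnorm
    _ = ‖v‖ := one_mul _
  have hadj : ∀ w : U, ContinuousLinearMap.adjoint fUU w = w →
      ContinuousLinearMap.adjoint fUA w = 0 :=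
    fun w hw => stmt12_aux g (ContinuousLinearMap.adjoint fBA)
      (ContinuousLinearMap.adjoint fUA) (ContinuousLinearMap.adjoint fBU)
      (ContinuousLinearMap.adjoint fUU) hgblock hgnorm w hw
  -- range inclusion
  have hrange : LinearMap.range (fUA : A →ₗ[ℂ] U) ≤ LinearMap.range (T : U →ₗ[ℂ] U) := by
    rintro _ ⟨x, rfl⟩
    have hcl : LinearMap.range (T : U →ₗ[ℂ] U) = (LinearMap.range (T : U →ₗ[ℂ] U))ᗮᗮ :=
      (Submodule.orthogonal_orthogonal _).symm
    rw [hcl]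
    intro w hw
    -- hw : w ∈ (range T)ᗮ
    have hTw : ContinuousLinearMap.adjoint T w = 0 := by
      apply ext_inner_left ℂ
      intro u
      rw [ContinuousLinearMap.adjoint_inner_right, inner_zero_right]
      exact (Submodule.mem_orthogonal _ w).mp hw (T u) ⟨u, rfl⟩
    have hfix : ContinuousLinearMap.adjoint fUU w = w := by
      have : ContinuousLinearMap.adjoint T w
          = w - ContinuousLinearMap.adjoint fUU w := by
        simp [hT, map_sub, ContinuousLinearMap.sub_apply, ContinuousLinearMap.one_def,
          ContinuousLinearMap.adjoint_id]
      rw [this] at hTw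
      linear_combination (norm := abel) -hTw
    have h0 : ContinuousLinearMap.adjoint fUA w = 0 := hadj w hfix
    have : (inner ℂ (fUA x) w : ℂ) = 0 := by
      rw [← ContinuousLinearMap.adjoint_inner_right, h0, inner_zero_right]
    rw [← inner_conj_symm, show inner ℂ ((fUA : A →ₗ[ℂ] U) x) w = (0 : ℂ) from this, map_zero]
  -- sections
  set Tl : U →ₗ[ℂ] U := (T : U →ₗ[ℂ] U) with hTl
  have hrangeTl : LinearMap.range (T : U →ₗ[ℂ] U) = LinearMap.range Tl := rfl
  have hkerTl : LinearMap.ker (T : U →ₗ[ℂ] U) = LinearMap.ker Tl := rfl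
  obtain ⟨s, hs⟩ := Tl.rangeRestrict.exists_rightInverse_of_surjective
    (LinearMap.range_eq_top.mpr Tl.surjective_rangeRestrict)
  have hsval : ∀ y : LinearMap.range Tl, Tl (s y) = (y : U) := by
    intro y
    have := LinearMap.congr_fun hs y
    simpa [Subtype.ext_iff] using this
  refine ⟨?_, ?_, hrange, hker⟩
  · -- i
    have hmem : ∀ x : A, fUA x ∈ LinearMap.range Tl := fun x => by
      rw [← hrangeTl]; exact hrange ⟨x, rfl⟩
    set il : A →ₗ[ℂ] U := s ∘ₗ ((fUA : A →ₗ[ℂ] U).codRestrict _ hmem) with hil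
    refine ⟨LinearMap.toContinuousLinearMap il, ?_⟩
    ext x
    show fUA x = T (LinearMap.toContinuousLinearMap il x)
    have : T (LinearMap.toContinuousLinearMap il x) = Tl (il x) := rfl
    rw [this, hil]
    simp only [LinearMap.comp_apply, LinearMap.codRestrict_apply]
    exact (hsval ⟨fUA x, hmem x⟩).symm
  · -- k
    set kl : U →ₗ[ℂ] B := (fBU : U →ₗ[ℂ] B) ∘ₗ
      (s ∘ₗ ((Submodule.orthogonalProjection (LinearMap.range Tl) : U →L[ℂ] (LinearMap.range Tl))
        : U →ₗ[ℂ] (LinearMap.range Tl))) with hkl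
    refine ⟨LinearMap.toContinuousLinearMap kl, ?_⟩
    ext u
    show fBU u = LinearMap.toContinuousLinearMap kl (T u)
    have hmemTu : T u ∈ LinearMap.range Tl := ⟨u, rfl⟩
    have hproj' : Submodule.orthogonalProjection (LinearMap.range Tl) (T u) = ⟨T u, hmemTu⟩ :=
      Subtype.ext (Submodule.starProjection_eq_self_iff.mpr hmemTu)
    have hcalc : LinearMap.toContinuousLinearMap kl (T u)
        = fBU (s (Submodule.orthogonalProjection (LinearMap.range Tl) (T u))) := rfl
    rw [hcalc, hproj']
    have hdiff : s ⟨T u, hmemTu⟩ - u ∈ LinearMap.ker (fBU : U →ₗ[ℂ] B) := by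
      apply hker
      rw [hkerTl]
      simp only [LinearMap.mem_ker, map_sub]
      rw [hsval ⟨T u, hmemTu⟩]
      exact sub_self _
    have h9 := LinearMap.mem_ker.mp hdiff
    rw [map_sub, sub_eq_zero] at h9
    exact h9.symm
end

section
/- (Weak-measurement collapse bound for Grover) Fix κ ∈ [0,1] and set ξ = √(1−κ). For an angle a with tan defined, define the collapse angle θ(a,κ) by tan(a − θ) = ξ tan(a), i.e. θ(a,κ) = arctan((1 − ξ) tan a / (1 + ξ tan² a)) in the first quadrant. Then for all angles a, |sin θ(a,κ)| ≤ (1−ξ)/(1+ξ), and consequently |θ(a,κ)| ≤ arcsin((1−ξ)/(1+ξ)) ≤ arcsin κ. -/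
/-- Weak-measurement collapse bound for Grover: fix `κ ∈ [0,1]`, set `ξ = √(1−κ)` and define
the collapse angle `θ(a,κ) = arctan((1 − ξ) tan a / (1 + ξ tan² a))`.  Then for every angle
`a`, `|sin θ(a,κ)| ≤ (1−ξ)/(1+ξ)`, hence `|θ(a,κ)| ≤ arcsin((1−ξ)/(1+ξ)) ≤ arcsin κ`. -/
theorem stmt17 (κ : ℝ) (hκ : κ ∈ Set.Icc (0 : ℝ) 1)
    (ξ : ℝ) (hξ : ξ = Real.sqrt (1 - κ))
    (θ : ℝ → ℝ)
    (hθ : ∀ a : ℝ, θ a = Real.arctan ((1 - ξ) * Real.tan a / (1 + ξ * Real.tan a ^ 2))) :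
    ∀ a : ℝ,
      |Real.sin (θ a)| ≤ (1 - ξ) / (1 + ξ) ∧
      |θ a| ≤ Real.arcsin ((1 - ξ) / (1 + ξ)) ∧
      Real.arcsin ((1 - ξ) / (1 + ξ)) ≤ Real.arcsin κ := by
  obtain ⟨hκ0, hκ1⟩ := hκ
  have hξ0 : 0 ≤ ξ := hξ ▸ Real.sqrt_nonneg _
  have hξsq : ξ ^ 2 = 1 - κ := by
    rw [hξ, Real.sq_sqrt (by linarith)]
  have hξ1 : ξ ≤ 1 := by nlinarith [sq_nonneg (ξ - 1)]
  have hc0 : 0 ≤ (1 - ξ) / (1 + ξ) := div_nonneg (by linarith) (by linarith)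
  have hcκ : (1 - ξ) / (1 + ξ) ≤ κ := by
    rw [div_le_iff₀ (by linarith)]; nlinarith
  intro a
  set t := Real.tan a with ht
  have hD : (0:ℝ) < 1 + ξ * t ^ 2 := by positivity
  set x := (1 - ξ) * t / (1 + ξ * t ^ 2) with hx
  have hxD : x * (1 + ξ * t ^ 2) = (1 - ξ) * t := by
    rw [hx, div_mul_cancel₀ _ hD.ne']
  clear_value x
  have hxD2 : x ^ 2 * (1 + ξ * t ^ 2) ^ 2 = ((1 - ξ) * t) ^ 2 := by
    rw [← mul_pow, hxD]
  -- key algebraic bound: 4 ξ x² ≤ (1-ξ)²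
  have hkey : x ^ 2 * (1 + ξ) ^ 2 ≤ (1 - ξ) ^ 2 * (1 + x ^ 2) := by
    have h4 : 4 * ξ * x ^ 2 ≤ (1 - ξ) ^ 2 := by
      have h5 : 4 * ξ * x ^ 2 * (1 + ξ * t ^ 2) ^ 2
          ≤ (1 - ξ) ^ 2 * (1 + ξ * t ^ 2) ^ 2 := by
        nlinarith [sq_nonneg ((1 - ξ) * (1 - ξ * t ^ 2)), sq_nonneg t, sq_nonneg x]
      exact le_of_mul_le_mul_right h5 (pow_pos hD 2)
    nlinarith [sq_nonneg x]
  -- x² ≤ c² (1 + x²)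
  have hx2 : x ^ 2 ≤ ((1 - ξ) / (1 + ξ)) ^ 2 * (1 + x ^ 2) := by
    rw [div_pow, div_mul_eq_mul_div, le_div_iff₀ (by positivity)]
    linarith [hkey]
  have hθa : θ a = Real.arctan x := by rw [hθ a, ← ht, ← hx]
  have hsin : |Real.sin (θ a)| ≤ (1 - ξ) / (1 + ξ) := by
    rw [hθa, Real.sin_arctan, abs_div, abs_of_pos (Real.sqrt_pos.mpr (by positivity)),
      div_le_iff₀ (Real.sqrt_pos.mpr (by positivity))]
    have h1 : |x| = Real.sqrt (x ^ 2) := (Real.sqrt_sq_eq_abs x).symm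
    have h2 : (1 - ξ) / (1 + ξ) * Real.sqrt (1 + x ^ 2)
        = Real.sqrt (((1 - ξ) / (1 + ξ)) ^ 2 * (1 + x ^ 2)) := by
      rw [Real.sqrt_mul (by positivity), Real.sqrt_sq hc0]
    rw [h1, h2]
    exact Real.sqrt_le_sqrt hx2
  refine ⟨hsin, ?_, Real.monotone_arcsin hcκ⟩
  -- |θ a| ≤ arcsin c
  have habs : |θ a| ≤ Real.pi / 2 := by
    rw [hθa, abs_le]
    exact ⟨(Real.neg_pi_div_two_lt_arctan x).le, (Real.arctan_lt_pi_div_two x).le⟩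
  have hsinabs : Real.sin |θ a| = |Real.sin (θ a)| := by
    rcases le_or_gt 0 (θ a) with h | h
    · rw [abs_of_nonneg h, abs_of_nonneg]
      apply Real.sin_nonneg_of_nonneg_of_le_pi h
      rw [abs_of_nonneg h] at habs
      linarith [Real.pi_pos]
    · have hs : Real.sin (θ a) < 0 := by
        rw [← neg_pos, ← Real.sin_neg]
        apply Real.sin_pos_of_pos_of_lt_pi (by linarith)
        rw [abs_of_neg h] at habs
        linarith [Real.pi_pos]
      rw [abs_of_neg h, abs_of_neg hs, Real.sin_neg]
  have heq : |θ a| = Real.arcsin (Real.sin |θ a|) :=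
    (Real.arcsin_sin (by linarith [abs_nonneg (θ a), Real.pi_pos]) habs).symm
  rw [heq, hsinabs]
  exact Real.monotone_arcsin hsin
end
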